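/- arXiv:1903.02799 — 8 statements merged into one kernel-verified Lean document; each statement's English description precedes it below -/
import Mathlib

section
/- Let X be a real normed vector space and m : X → ℝ three times continuously Fréchet differentiable. Then for all x, e ∈ X: m(x + e) − m(x) = (1/2)(Dm(x)(e) + Dm(x+e)(e)) + (1/2) ∫₀¹ D³m(x + s·e)(e, e, e) · s(s−1) ds. -/
open intervalIntegral

lemma key_line (X : Type*) [NormedAddCommGroup X] [NormedSpace ℝ X]
    (m : X → ℝ) (hm : ContDiff ℝ 3 m) (x e : X) :
    ∀ n : ℕ, n ≤ 3 → ∀ t : ℝ,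
      iteratedDeriv n (fun s : ℝ => m (x + s • e)) t
        = iteratedFDeriv ℝ n m (x + t • e) (fun _ => e) := by
  intro n
  induction n with
  | zero => intro _ t; simp
  | succ n IH =>
      intro hn t
      rw [iteratedDeriv_succ]
      have hfun : iteratedDeriv n (fun s : ℝ => m (x + s • e))
          = fun t : ℝ => iteratedFDeriv ℝ n m (x + t • e) (fun _ => e) :=
        funext (IH (by omega))
      rw [hfun]
      have hF : Differentiable ℝ (iteratedFDeriv ℝ n m) :=
        hm.differentiable_iteratedFDeriv (by exact_mod_cast (by omega : n < 3))
      have hc : HasDerivAt (fun t : ℝ => x + t • e) e t := by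
        simpa using ((hasDerivAt_id t).smul_const e).const_add x
      have hcomp : HasDerivAt (fun t : ℝ => iteratedFDeriv ℝ n m (x + t • e))
          (fderiv ℝ (iteratedFDeriv ℝ n m) (x + t • e) e) t :=
        (hF.differentiableAt.hasFDerivAt).comp_hasDerivAt t hc
      have hL := (ContinuousMultilinearMap.apply ℝ (fun _ : Fin n => X) ℝ
        (fun _ => e)).hasFDerivAt.comp_hasDerivAt t hcomp
      have hd : deriv (fun t : ℝ => iteratedFDeriv ℝ n m (x + t • e) (fun _ => e)) t
          = (fderiv ℝ (iteratedFDeriv ℝ n m) (x + t • e) e) (fun _ => e) := hL.deriv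
      rw [hd, iteratedFDeriv_succ_apply_left]
      congr 1

lemma trap1d (g : ℝ → ℝ) (hg : ContDiff ℝ 3 g) :
    g 1 - g 0 = (1 / 2) * (deriv g 0 + deriv g 1)
      + (1 / 2) * ∫ s in (0:ℝ)..1, iteratedDeriv 3 g s * (s * (s - 1)) := by
  have hg1 : ContDiff ℝ 2 (deriv g) :=
    (contDiff_succ_iff_deriv.mp (show ContDiff ℝ (2 + 1) g by exact_mod_cast hg)).2.2
  have hg2 : ContDiff ℝ 1 (deriv (deriv g)) :=
    (contDiff_succ_iff_deriv.mp (show ContDiff ℝ (1 + 1) (deriv g) by exact_mod_cast hg1)).2.2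
  have h3 : iteratedDeriv 3 g = deriv (deriv (deriv g)) := by
    rw [iteratedDeriv_succ, iteratedDeriv_succ, iteratedDeriv_one]
  have hdg : ∀ s : ℝ, HasDerivAt g (deriv g s) s := fun s =>
    (hg.differentiable (by norm_num)).differentiableAt.hasDerivAt
  have hdg1 : ∀ s : ℝ, HasDerivAt (deriv g) (deriv (deriv g) s) s := fun s =>
    (hg1.differentiable (by norm_num)).differentiableAt.hasDerivAt
  have hdg2 : ∀ s : ℝ, HasDerivAt (deriv (deriv g)) (deriv (deriv (deriv g)) s) s := fun s =>
    (hg2.differentiable (by norm_num)).differentiableAt.hasDerivAt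
  have hu : ∀ s : ℝ, HasDerivAt (fun s : ℝ => s * (s - 1)) (2 * s - 1) s := by
    intro s
    have := (hasDerivAt_id s).mul ((hasDerivAt_id s).sub_const 1)
    simp only [id] at this
    exact this.congr_deriv (by ring)
  have hcont3 : Continuous (deriv (deriv (deriv g))) := hg2.continuous_deriv le_rfl
  have hcont2 : Continuous (deriv (deriv g)) := hg1.continuous_deriv (by norm_num)
  have hcont1 : Continuous (deriv g) := hg.continuous_deriv (by norm_num)
  have A : (∫ s in (0:ℝ)..1, (s * (s - 1)) * deriv (deriv (deriv g)) s)
      = - ∫ s in (0:ℝ)..1, (2 * s - 1) * deriv (deriv g) s := by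
    rw [integral_mul_deriv_eq_deriv_mul (fun s _ => hu s) (fun s _ => hdg2 s)
      (((continuous_const.mul continuous_id).sub continuous_const).intervalIntegrable _ _)
      (hcont3.intervalIntegrable _ _)]
    norm_num
  have B : (∫ s in (0:ℝ)..1, (2 * s - 1) * deriv (deriv g) s)
      = deriv g 1 + deriv g 0 - 2 * (g 1 - g 0) := by
    have hu2 : ∀ s : ℝ, HasDerivAt (fun s : ℝ => 2 * s - 1) 2 s := by
      intro s
      simpa using ((hasDerivAt_id s).const_mul (2:ℝ)).sub_const 1
    rw [integral_mul_deriv_eq_deriv_mul (fun s _ => hu2 s) (fun s _ => hdg1 s)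
      (continuous_const.intervalIntegrable _ _) (hcont2.intervalIntegrable _ _)]
    have : (∫ s in (0:ℝ)..1, 2 * deriv g s) = 2 * (g 1 - g 0) := by
      rw [integral_const_mul, integral_deriv_eq_sub
        (fun s _ => (hg.differentiable (by norm_num)).differentiableAt) (hcont1.intervalIntegrable _ _)]
    rw [this]; ring
  have hI : (∫ s in (0:ℝ)..1, iteratedDeriv 3 g s * (s * (s - 1)))
      = ∫ s in (0:ℝ)..1, (s * (s - 1)) * deriv (deriv (deriv g)) s := by
    apply intervalIntegral.integral_congr
    intro s _
    simp only [h3]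
    ring
  rw [hI, A, B]; ring

/-- Trapezoidal-rule identity with third-derivative remainder along a segment:
for `m : X → ℝ` three times continuously Fréchet differentiable on a real normed
vector space `X`, and all `x, e ∈ X`,
`m(x+e) − m(x) = (1/2)(Dm(x)(e) + Dm(x+e)(e)) + (1/2)∫₀¹ D³m(x+s•e)(e,e,e) s(s−1) ds`. -/
theorem trapezoidal_rule_frechet_third_derivative_remainder
    (X : Type*) [NormedAddCommGroup X] [NormedSpace ℝ X]
    (m : X → ℝ) (hm : ContDiff ℝ 3 m) (x e : X) :
    m (x + e) - m x
      = (1 / 2) * (fderiv ℝ m x e + fderiv ℝ m (x + e) e)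
        + (1 / 2) * ∫ s in (0:ℝ)..1,
            (iteratedFDeriv ℝ 3 m (x + s • e) fun _ => e) * (s * (s - 1)) := by
  set g : ℝ → ℝ := fun s => m (x + s • e) with hgdef
  have hline : ContDiff ℝ 3 (fun s : ℝ => x + s • e) :=
    contDiff_const.add (contDiff_id.smul contDiff_const)
  have hg : ContDiff ℝ 3 g := hm.comp hline
  have key := key_line X m hm x e
  have h1 : ∀ t : ℝ, deriv g t = fderiv ℝ m (x + t • e) e := by
    intro t
    have := key 1 (by norm_num) t
    rw [iteratedDeriv_one] at this
    rw [this, iteratedFDeriv_one_apply]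
  have h01 : g 1 - g 0 = m (x + e) - m x := by simp [hgdef]
  have hT := trap1d g hg
  rw [h01, h1 0, h1 1] at hT
  simp only [zero_smul, add_zero, one_smul] at hT
  rw [hT]
  congr 2
  apply intervalIntegral.integral_congr
  intro s _
  simp only [hgdef, key 3 le_rfl]
end

section
/- Let X be a real normed vector space and m : X → ℝ three times continuously Fréchet differentiable. Let x, e ∈ X and suppose Dm(x + e)(e) = 0. Then m(x + e) − m(x) = (1/2) Dm(x)(e) + (1/2) ∫₀¹ D³m(x + s·e)(e, e, e) · s(s−1) ds. -/
open intervalIntegral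

set_option maxHeartbeats 1000000

/-- If `m : X → ℝ` is `C³` and `Dm(x+e)(e) = 0`, then
`m(x+e) − m(x) = (1/2) Dm(x)(e) + (1/2)∫₀¹ D³m(x+s•e)(e,e,e) s(s−1) ds`. -/
theorem trapezoidal_rule_critical_endpoint
    (X : Type*) [NormedAddCommGroup X] [NormedSpace ℝ X]
    (m : X → ℝ) (hm : ContDiff ℝ 3 m) (x e : X)
    (hcrit : fderiv ℝ m (x + e) e = 0) :
    m (x + e) - m x
      = (1 / 2) * fderiv ℝ m x e
        + (1 / 2) * ∫ s in (0:ℝ)..1,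
            (iteratedFDeriv ℝ 3 m (x + s • e) fun _ => e) * (s * (s - 1)) := by
  set c : ℝ → X := fun s => x + s • e with hcdef
  have hcd : ∀ s : ℝ, HasDerivAt c e s := fun s => by
    simpa [hcdef] using ((hasDerivAt_id s).smul_const e).const_add x
  have ccont : Continuous c := by
    continuity
  have hD1 : ContDiff ℝ 2 (fderiv ℝ m) := hm.fderiv_right (by norm_num)
  have hD2 : ContDiff ℝ 1 (fderiv ℝ (fderiv ℝ m)) := hD1.fderiv_right (by norm_num)
  have hD3 : Continuous (fderiv ℝ (fderiv ℝ (fderiv ℝ m))) := by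
    exact (contDiff_zero.mp (hD2.fderiv_right (by norm_num)))
  set g : ℝ → ℝ := fun s => m (c s) with hgdef
  set g1 : ℝ → ℝ := fun s => fderiv ℝ m (c s) e with hg1def
  set g2 : ℝ → ℝ := fun s => fderiv ℝ (fderiv ℝ m) (c s) e e with hg2def
  set g3 : ℝ → ℝ := fun s => fderiv ℝ (fderiv ℝ (fderiv ℝ m)) (c s) e e e with hg3def
  have hg : ∀ s : ℝ, HasDerivAt g (g1 s) s := fun s =>
    ((hm.differentiable (by norm_num) (c s)).hasFDerivAt).comp_hasDerivAt s (hcd s)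
  have hfd1 : ∀ s : ℝ, HasDerivAt (fun t => fderiv ℝ m (c t))
      (fderiv ℝ (fderiv ℝ m) (c s) e) s := fun s =>
    ((hD1.differentiable (by norm_num) (c s)).hasFDerivAt).comp_hasDerivAt s (hcd s)
  have hg1 : ∀ s : ℝ, HasDerivAt g1 (g2 s) s := fun s => by
    simpa using (hfd1 s).clm_apply (hasDerivAt_const s e)
  have hfd2 : ∀ s : ℝ, HasDerivAt (fun t => fderiv ℝ (fderiv ℝ m) (c t))
      (fderiv ℝ (fderiv ℝ (fderiv ℝ m)) (c s) e) s := fun s =>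
    ((hD2.differentiable (by norm_num) (c s)).hasFDerivAt).comp_hasDerivAt s (hcd s)
  have hg2 : ∀ s : ℝ, HasDerivAt g2 (g3 s) s := fun s => by
    simpa using (((hfd2 s).clm_apply (hasDerivAt_const s e)).clm_apply
      (hasDerivAt_const s e))
  -- continuity of g1, g2, g3
  have cg1 : Continuous g1 := (hD1.continuous.comp ccont).clm_apply continuous_const
  have cg2 : Continuous g2 :=
    ((hD2.continuous.comp ccont).clm_apply continuous_const).clm_apply continuous_const
  have cg3 : Continuous g3 :=
    (((hD3.comp ccont).clm_apply continuous_const).clm_apply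
      continuous_const).clm_apply continuous_const
  -- fundamental theorem of calculus
  have hI1 : ∫ s in (0:ℝ)..1, g1 s = g 1 - g 0 :=
    intervalIntegral.integral_eq_sub_of_hasDerivAt (fun s _ => hg s)
      (cg1.intervalIntegrable 0 1)
  -- first integration by parts
  have hu : ∀ s : ℝ, HasDerivAt (fun t : ℝ => t * (t - 1)) (2 * s - 1) s := fun s => by
    have h := (hasDerivAt_id s).mul ((hasDerivAt_id s).sub_const 1)
    simp only [Pi.mul_def, id_eq, one_mul, mul_one] at h
    refine h.congr_deriv ?_
    ring
  have hIBP1 : ∫ s in (0:ℝ)..1, (s * (s - 1)) * g3 s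
      = - ∫ s in (0:ℝ)..1, (2 * s - 1) * g2 s := by
    rw [intervalIntegral.integral_mul_deriv_eq_deriv_mul
      (fun s _ => hu s) (fun s _ => hg2 s)
      ((by continuity : Continuous fun s : ℝ => 2 * s - 1).intervalIntegrable 0 1)
      (cg3.intervalIntegrable 0 1)]
    ring
  -- second integration by parts
  have hIBP2 : ∫ s in (0:ℝ)..1, (2 * s - 1) * g2 s
      = g1 1 + g1 0 - 2 * (g 1 - g 0) := by
    have hu2 : ∀ s : ℝ, HasDerivAt (fun t : ℝ => 2 * t - 1) 2 s := fun s => by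
      simpa using ((hasDerivAt_id s).const_mul 2).sub_const 1
    rw [intervalIntegral.integral_mul_deriv_eq_deriv_mul
      (fun s _ => hu2 s)
      (fun s _ => hg1 s)
      ((continuous_const : Continuous fun _ : ℝ => (2:ℝ)).intervalIntegrable 0 1)
      (cg2.intervalIntegrable 0 1)]
    have : ∫ s in (0:ℝ)..1, 2 * g1 s = 2 * (g 1 - g 0) := by
      rw [intervalIntegral.integral_const_mul, hI1]
    rw [this]; ring
  -- identify the iterated derivative
  have hiter : ∀ s : ℝ,
      (iteratedFDeriv ℝ 3 m (x + s • e) fun _ => e) = g3 s := fun s => by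
    have h3 : (iteratedFDeriv ℝ 3 m (c s) fun _ => e)
        = fderiv ℝ (fderiv ℝ (fderiv ℝ m)) (c s) e e e := by
      rw [show (3:ℕ) = 2 + 1 from rfl, iteratedFDeriv_succ_apply_right,
        iteratedFDeriv_two_apply]
      rfl
    simpa [hcdef] using h3
  have hInt : ∫ s in (0:ℝ)..1,
      (iteratedFDeriv ℝ 3 m (x + s • e) fun _ => e) * (s * (s - 1))
      = ∫ s in (0:ℝ)..1, (s * (s - 1)) * g3 s := by
    apply intervalIntegral.integral_congr
    intro s _
    simp only [hiter s]
    ring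
  have h10 : g1 1 = 0 := by
    have : c 1 = x + e := by simp [hcdef]
    simp [hg1def, this, hcrit]
  have h00 : g1 0 = fderiv ℝ m x e := by simp [hg1def, hcdef]
  have hg0 : g 0 = m x := by simp [hgdef, hcdef]
  have hg1' : g 1 = m (x + e) := by simp [hgdef, hcdef]
  have key : (∫ s in (0:ℝ)..1,
      (iteratedFDeriv ℝ 3 m (x + s • e) fun _ => e) * (s * (s - 1)))
      = 2 * (g 1 - g 0) - g1 0 := by
    rw [hInt, hIBP1, hIBP2, h10]; ring
  rw [key, ← h00, ← hg0, ← hg1']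
  ring
end

section
/- Let Q be a real normed vector space, i : Q → ℝ three times continuously Fréchet differentiable and j : Q → ℝ four times continuously Fréchet differentiable. Define m : Q × Q → ℝ by m(q, p) := i(q) + Dj(q)(p). Then m is three times continuously Fréchet differentiable, and for all q, p, e, e* ∈ Q the third Fréchet derivative of m at (q, p) evaluated at three copies of the direction (e, e*) satisfies: D³m(q, p)((e, e*), (e, e*), (e, e*)) = D³i(q)(e, e, e) + D⁴j(q)(e, e, e, p) + 3·D³j(q)(e, e, e*). -/
section Helpers

variable {E : Type*} [NormedAddCommGroup E] [NormedSpace ℝ E]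
variable {F : Type*} [NormedAddCommGroup F] [NormedSpace ℝ F]

private lemma lineLemma (n : ℕ) (f : E → F) (hf : ContDiff ℝ n f) (x v : E) :
    iteratedFDeriv ℝ n f x (fun _ => v) = iteratedDeriv n (fun t : ℝ => f (x + t • v)) 0 := by
  induction n generalizing f with
  | zero => simp
  | succ n ih =>
    have hd : Differentiable ℝ f := hf.differentiable (by simp)
    have hfd : ContDiff ℝ n (fderiv ℝ f) := hf.fderiv_right (by norm_cast)
    have hg : ContDiff ℝ n (fun y => fderiv ℝ f y v) :=
      (ContinuousLinearMap.apply ℝ F v).contDiff.comp hfd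
    have hderiv : deriv (fun t : ℝ => f (x + t • v)) = fun t => fderiv ℝ f (x + t • v) v := by
      funext t
      have h1 : HasDerivAt (fun t : ℝ => x + t • v) v t := by
        simpa using ((hasDerivAt_id t).smul_const v).const_add x
      exact ((hd (x + t • v)).hasFDerivAt.comp_hasDerivAt t h1).deriv
    rw [iteratedDeriv_succ', hderiv, ← ih _ hg, iteratedFDeriv_succ_apply_right]
    rw [show (fun y => fderiv ℝ f y v)
        = ⇑(ContinuousLinearMap.apply ℝ F v) ∘ fderiv ℝ f from rfl,
      (ContinuousLinearMap.apply ℝ F v).iteratedFDeriv_comp_left hfd.contDiffAt le_rfl]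
    rfl

private lemma mixedLemma (n : ℕ) (f : E → F) (hf : ContDiff ℝ (n + 1 : ℕ) f) (x v w : E) :
    iteratedFDeriv ℝ (n + 1) f x (Fin.snoc (fun _ => v) w)
      = iteratedDeriv n (fun t : ℝ => fderiv ℝ f (x + t • v) w) 0 := by
  have hfd : ContDiff ℝ n (fderiv ℝ f) := hf.fderiv_right (by norm_cast)
  have hg : ContDiff ℝ n (fun y => fderiv ℝ f y w) :=
    (ContinuousLinearMap.apply ℝ F w).contDiff.comp hfd
  rw [iteratedFDeriv_succ_apply_right]
  simp only [Fin.init_snoc, Fin.snoc_last]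
  have h1 : iteratedFDeriv ℝ n (fderiv ℝ f) x (fun _ => v) w
      = iteratedFDeriv ℝ n (fun y => fderiv ℝ f y w) x (fun _ => v) := by
    rw [show (fun y => fderiv ℝ f y w)
        = ⇑(ContinuousLinearMap.apply ℝ F w) ∘ fderiv ℝ f from rfl,
      (ContinuousLinearMap.apply ℝ F w).iteratedFDeriv_comp_left hfd.contDiffAt le_rfl]
    rfl
  rw [h1, lineLemma n _ hg x v]

private lemma iterDerivAdd {n : ℕ} {f g : ℝ → ℝ} (hf : ContDiff ℝ n f) (hg : ContDiff ℝ n g)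
    (x : ℝ) :
    iteratedDeriv n (fun t => f t + g t) x = iteratedDeriv n f x + iteratedDeriv n g x := by
  simp only [iteratedDeriv_eq_iteratedFDeriv, iteratedFDeriv_add_apply' hf.contDiffAt hg.contDiffAt,
    ContinuousMultilinearMap.add_apply]

private lemma mulLemma (n : ℕ) (c : ℝ → ℝ) (hc : ContDiff ℝ (n + 1 : ℕ) c) :
    iteratedDeriv (n + 1) (fun t => t * c t) 0 = (n + 1 : ℝ) * iteratedDeriv n c 0 := by
  induction n generalizing c with
  | zero =>
    have hdc : DifferentiableAt ℝ c 0 :=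
      (hc.differentiable (by simp)) 0
    rw [iteratedDeriv_one, deriv_fun_mul differentiableAt_fun_id hdc]
    simp [iteratedDeriv_zero]
  | succ n ih =>
    have hc' : ContDiff ℝ ((n + 1 : ℕ) + 1) c := by exact_mod_cast hc
    have hdc : ContDiff ℝ (n + 1 : ℕ) (deriv c) := (contDiff_succ_iff_deriv.mp hc').2.2
    have hdiff : Differentiable ℝ c :=
      hc.differentiable (by simp)
    have hder : deriv (fun t => t * c t) = fun t => c t + t * deriv c t := by
      funext t
      rw [deriv_fun_mul differentiableAt_fun_id (hdiff t)]
      simp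
    have hc1 : ContDiff ℝ (n + 1 : ℕ) c := hc.of_le (by exact_mod_cast Nat.le_succ (n + 1))
    have hc2 : ContDiff ℝ (n + 1 : ℕ) (fun t => t * deriv c t) := contDiff_id.mul hdc
    rw [iteratedDeriv_succ', hder, iterDerivAdd hc1 hc2 0, ih (deriv c) hdc,
      ← iteratedDeriv_succ']
    push_cast
    ring

end Helpers

/-- For `i ∈ C³(Q,ℝ)`, `j ∈ C⁴(Q,ℝ)` and `m(q,p) := i(q) + Dj(q)(p)`, the auxiliary
functional `m` is `C³` and its third Fréchet derivative at `(q,p)` in three copies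
of the direction `(e, e*)` is
`D³m(q,p)((e,e*),(e,e*),(e,e*)) = D³i(q)(e,e,e) + D⁴j(q)(e,e,e,p) + 3 D³j(q)(e,e,e*)`. -/
theorem third_derivative_auxiliary_functional
    (Q : Type*) [NormedAddCommGroup Q] [NormedSpace ℝ Q]
    (i : Q → ℝ) (hi : ContDiff ℝ 3 i)
    (j : Q → ℝ) (hj : ContDiff ℝ 4 j)
    (m : Q × Q → ℝ) (hm : ∀ q p : Q, m (q, p) = i q + fderiv ℝ j q p) :
    ContDiff ℝ 3 m ∧
      ∀ q p e estar : Q,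
        (iteratedFDeriv ℝ 3 m (q, p) fun _ => (e, estar))
          = (iteratedFDeriv ℝ 3 i q fun _ => e)
            + iteratedFDeriv ℝ 4 j q ![e, e, e, p]
            + 3 * iteratedFDeriv ℝ 3 j q ![e, e, estar] := by
  have hi' : ContDiff ℝ (3 : ℕ) i := by exact_mod_cast hi
  have hj' : ContDiff ℝ (4 : ℕ) j := by exact_mod_cast hj
  have hDj : ContDiff ℝ (3 : ℕ) (fderiv ℝ j) := hj'.fderiv_right (by norm_cast)
  have hm' : m = fun x : Q × Q => i x.1 + fderiv ℝ j x.1 x.2 := funext fun x => hm x.1 x.2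
  have hmc : ContDiff ℝ (3 : ℕ) m := by
    rw [hm']
    exact (hi'.comp contDiff_fst).add ((hDj.comp contDiff_fst).clm_apply contDiff_snd)
  refine ⟨by exact_mod_cast hmc, fun q p e estar => ?_⟩
  set A : ℝ → ℝ := fun t => i (q + t • e) with hA
  set B : ℝ → ℝ := fun t => fderiv ℝ j (q + t • e) p with hB
  set C : ℝ → ℝ := fun t => fderiv ℝ j (q + t • e) estar with hC
  have hline : ContDiff ℝ (3 : ℕ) (fun t : ℝ => q + t • e) :=
    contDiff_const.add (contDiff_id.smul contDiff_const)
  have hAc : ContDiff ℝ (3 : ℕ) A := hi'.comp hline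
  have hBc : ContDiff ℝ (3 : ℕ) B :=
    ((ContinuousLinearMap.apply ℝ ℝ p).contDiff.comp hDj).comp hline
  have hCc : ContDiff ℝ (3 : ℕ) C :=
    ((ContinuousLinearMap.apply ℝ ℝ estar).contDiff.comp hDj).comp hline
  -- left-hand side
  have hLHS : (iteratedFDeriv ℝ 3 m (q, p) fun _ => (e, estar))
      = iteratedDeriv 3 (fun t => (A t + B t) + t * C t) 0 := by
    rw [lineLemma 3 m hmc (q, p) (e, estar)]
    congr 1
    funext t
    have hpt : (q, p) + t • (e, estar) = (q + t • e, p + t • estar) := by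
      simp [Prod.ext_iff]
    rw [hpt, hm]
    simp only [hA, hB, hC]
    rw [map_add, map_smul]
    simp [smul_eq_mul]
    ring
  -- right-hand side pieces
  have hi3 : (iteratedFDeriv ℝ 3 i q fun _ => e) = iteratedDeriv 3 A 0 :=
    lineLemma 3 i hi' q e
  have hsnoc4 : ![e, e, e, p] = Fin.snoc (fun _ : Fin 3 => e) p := by
    funext k; fin_cases k <;> simp [Fin.snoc]
  have hsnoc3 : ![e, e, estar] = Fin.snoc (fun _ : Fin 2 => e) estar := by
    funext k; fin_cases k <;> simp [Fin.snoc]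
  have hj4 : iteratedFDeriv ℝ 4 j q ![e, e, e, p] = iteratedDeriv 3 B 0 := by
    rw [hsnoc4]
    exact mixedLemma 3 j hj' q e p
  have hj3 : iteratedFDeriv ℝ 3 j q ![e, e, estar] = iteratedDeriv 2 C 0 := by
    rw [hsnoc3]
    exact mixedLemma 2 j (hj'.of_le (by exact_mod_cast Nat.le_succ 3)) q e estar
  rw [hLHS, hi3, hj4, hj3]
  have h1 : ContDiff ℝ (3 : ℕ) (fun t => A t + B t) := hAc.add hBc
  have h2 : ContDiff ℝ (3 : ℕ) (fun t => t * C t) := contDiff_id.mul hCc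
  rw [iterDerivAdd h1 h2 0, iterDerivAdd hAc hBc 0,
    show (3 : ℕ) = 2 + 1 from rfl, mulLemma 2 C hCc]
  push_cast
  ring
end

section
/- (Error Representation for the Reduced System) Let Q be a real normed vector space, j : Q → ℝ four times continuously Fréchet differentiable, and i : Q → ℝ three times continuously Fréchet differentiable. Suppose q̄ ∈ Q satisfies the first-order optimality condition Dj(q̄) = 0, and p̄ ∈ Q solves the reduced adjoint problem D²j(q̄)(δq, p̄) = −Di(q̄)(δq) for all δq ∈ Q. Then for arbitrary fixed q̃, p̃ ∈ Q, setting e := q̄ − q̃ and e* := p̄ − p̃, one has: i(q̄) − i(q̃) = (1/2)·Dj(q̃)(e*) + (1/2)·[Di(q̃)(e) + D²j(q̃)(e, p̃)] + Dj(q̃)(p̃) + R⁽³⁾, where R⁽³⁾ = (1/2) ∫₀¹ [ D³i(q̃ + s·e)(e, e, e) + D⁴j(q̃ + s·e)(e, e, e, p̃ + s·e*) + 3·D³j(q̃ + s·e)(e, e, e*) ] · s(s−1) ds. -/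
section Helpers

variable {Q : Type*} [NormedAddCommGroup Q] [NormedSpace ℝ Q]

lemma hasDerivAt_iteratedFDeriv_line (f : Q → ℝ) (n : ℕ) (hf : ContDiff ℝ (n+1) f)
    (c v : Q) (m : Fin n → Q) (s : ℝ) :
    HasDerivAt (fun t : ℝ => iteratedFDeriv ℝ n f (c + t • v) m)
      (iteratedFDeriv ℝ (n+1) f (c + s • v) (Fin.cons v m)) s := by
  have hline : HasDerivAt (fun t : ℝ => c + t • v) v s := by
    simpa using ((hasDerivAt_id s).smul_const v).const_add c
  have hF : ContDiff ℝ 1 (iteratedFDeriv ℝ n f) := by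
    apply hf.iteratedFDeriv_right
    norm_cast
    omega
  have hFd : DifferentiableAt ℝ (iteratedFDeriv ℝ n f) (c + s • v) :=
    (hF.differentiable one_ne_zero).differentiableAt
  have h1 : HasDerivAt (fun t : ℝ => iteratedFDeriv ℝ n f (c + t • v))
      (fderiv ℝ (iteratedFDeriv ℝ n f) (c + s • v) v) s :=
    hFd.hasFDerivAt.comp_hasDerivAt s hline
  have h2 : HasDerivAt (fun t : ℝ => iteratedFDeriv ℝ n f (c + t • v) m)
      (fderiv ℝ (iteratedFDeriv ℝ n f) (c + s • v) v m) s := (ContinuousMultilinearMap.apply ℝ (fun _ : Fin n => Q) ℝ m).hasFDerivAt.comp_hasDerivAt s h1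
  simpa [iteratedFDeriv_succ_apply_left] using h2

lemma continuous_iteratedFDeriv_line (f : Q → ℝ) (n : ℕ) (hf : ContDiff ℝ n f)
    (c v : Q) (m : Fin n → Q) :
    Continuous (fun s : ℝ => iteratedFDeriv ℝ n f (c + s • v) m) := by
  have h : Continuous (iteratedFDeriv ℝ n f) := hf.continuous_iteratedFDeriv le_rfl
  exact (ContinuousMultilinearMap.apply ℝ (fun _ : Fin n => Q) ℝ m).continuous.comp
    (h.comp (by continuity))

lemma ml2_add (g : ContinuousMultilinearMap ℝ (fun _ : Fin 2 => Q) ℝ) (a u v : Q) :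
    g ![a, u + v] = g ![a, u] + g ![a, v] := by
  have h : ∀ w : Q, ![a, w] = Function.update ![a, u] 1 w := by
    intro w; funext i0; fin_cases i0 <;> simp [Function.update]
  rw [h (u + v), g.map_update_add, ← h u, ← h v]

lemma ml4_last (g : ContinuousMultilinearMap ℝ (fun _ : Fin 4 => Q) ℝ) (a b c u v : Q) (s : ℝ) :
    g ![a, b, c, u + s • v] = g ![a, b, c, u] + s * g ![a, b, c, v] := by
  have h : ∀ w : Q, ![a, b, c, w] = Function.update ![a, b, c, u] 3 w := by
    intro w; funext i0; fin_cases i0 <;> simp [Function.update]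
  rw [h (u + s • v), g.map_update_add, g.map_update_smul, ← h u, ← h v, smul_eq_mul]

lemma trapezoid_rule (g g1 g2 g3 : ℝ → ℝ)
    (h1 : ∀ s, HasDerivAt g (g1 s) s) (h2 : ∀ s, HasDerivAt g1 (g2 s) s)
    (h3 : ∀ s, HasDerivAt g2 (g3 s) s) (hc : Continuous g3) :
    g 1 - g 0 = (1/2) * (g1 0 + g1 1) + (1/2) * ∫ s in (0:ℝ)..1, g3 s * (s*(s-1)) := by
  have hcg2 : Continuous g2 := by
    rw [continuous_iff_continuousAt]; exact fun x => (h3 x).differentiableAt.continuousAt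
  have hcg1 : Continuous g1 := by
    rw [continuous_iff_continuousAt]; exact fun x => (h2 x).differentiableAt.continuousAt
  have hu : ∀ x : ℝ, HasDerivAt (fun s : ℝ => s*(s-1)) (2*x-1) x := by
    intro x
    have : HasDerivAt (fun s : ℝ => s*(s-1)) (1 * (id x - 1) + id x * 1) x :=
      (hasDerivAt_id x).mul ((hasDerivAt_id x).sub_const 1)
    convert this using 1; simp; ring
  have IBP1 : ∫ s in (0:ℝ)..1, (s*(s-1)) * g3 s
      = (1*((1:ℝ)-1))*g2 1 - (0*((0:ℝ)-1))*g2 0 - ∫ s in (0:ℝ)..1, (2*s-1) * g2 s := by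
    apply intervalIntegral.integral_mul_deriv_eq_deriv_mul
      (fun x _ => hu x) (fun x _ => h3 x)
    · exact (by continuity : Continuous fun s : ℝ => 2*s-1).intervalIntegrable _ _
    · exact hc.intervalIntegrable _ _
  have IBP2 : ∫ s in (0:ℝ)..1, (2*s-1) * g2 s
      = (2*1-1)*g1 1 - (2*0-1)*g1 0 - ∫ s in (0:ℝ)..1, 2 * g1 s := by
    apply intervalIntegral.integral_mul_deriv_eq_deriv_mul
      (fun x _ => by simpa using ((hasDerivAt_id x).const_mul 2).sub_const 1) (fun x _ => h2 x)
    · exact continuous_const.intervalIntegrable _ _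
    · exact hcg2.intervalIntegrable _ _
  have FTC : ∫ s in (0:ℝ)..1, g1 s = g 1 - g 0 :=
    intervalIntegral.integral_eq_sub_of_hasDerivAt (fun x _ => h1 x)
      (hcg1.intervalIntegrable _ _)
  have h2int : ∫ s in (0:ℝ)..1, 2 * g1 s = 2 * (g 1 - g 0) := by
    rw [intervalIntegral.integral_const_mul, FTC]
  have hcomm : ∫ s in (0:ℝ)..1, g3 s * (s*(s-1)) = ∫ s in (0:ℝ)..1, (s*(s-1)) * g3 s := by
    simp [mul_comm]
  rw [hcomm, IBP1, IBP2, h2int]; ring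

end Helpers

/-- Error representation for the reduced system (Theorem 1 of the paper).
If `Dj(q̄) = 0` and `p̄` solves the reduced adjoint problem
`D²j(q̄)(δq, p̄) = −Di(q̄)(δq)` for all `δq`, then for arbitrary `q̃, p̃`,
with `e := q̄ − q̃` and `e* := p̄ − p̃`,
`i(q̄) − i(q̃) = (1/2) Dj(q̃)(e*) + (1/2)[Di(q̃)(e) + D²j(q̃)(e, p̃)] + Dj(q̃)(p̃) + R⁽³⁾`,
where `R⁽³⁾ = (1/2)∫₀¹ [D³i(q̃+se)(e,e,e) + D⁴j(q̃+se)(e,e,e,p̃+se*) + 3 D³j(q̃+se)(e,e,e*)] s(s−1) ds`. -/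
theorem error_representation_reduced_system
    (Q : Type*) [NormedAddCommGroup Q] [NormedSpace ℝ Q]
    (j : Q → ℝ) (hj : ContDiff ℝ 4 j)
    (i : Q → ℝ) (hi : ContDiff ℝ 3 i)
    (qbar pbar : Q)
    (hopt : fderiv ℝ j qbar = 0)
    (hadj : ∀ δq : Q, iteratedFDeriv ℝ 2 j qbar ![δq, pbar] = -(fderiv ℝ i qbar δq))
    (qt pt : Q) :
    i qbar - i qt
      = (1 / 2) * fderiv ℝ j qt (pbar - pt)
        + (1 / 2) * (fderiv ℝ i qt (qbar - qt)
            + iteratedFDeriv ℝ 2 j qt ![qbar - qt, pt])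
        + fderiv ℝ j qt pt
        + (1 / 2) * ∫ s in (0:ℝ)..1,
            ((iteratedFDeriv ℝ 3 i (qt + s • (qbar - qt)) fun _ => qbar - qt)
              + iteratedFDeriv ℝ 4 j (qt + s • (qbar - qt))
                  ![qbar - qt, qbar - qt, qbar - qt, pt + s • (pbar - pt)]
              + 3 * iteratedFDeriv ℝ 3 j (qt + s • (qbar - qt))
                  ![qbar - qt, qbar - qt, pbar - pt])
            * (s * (s - 1)) := by
  set e : Q := qbar - qt with he
  set es : Q := pbar - pt with hes
  set x : ℝ → Q := fun s => qt + s • e with hx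
  set g : ℝ → ℝ := fun s => iteratedFDeriv ℝ 0 i (x s) ![]
      + iteratedFDeriv ℝ 1 j (x s) ![pt] + s * iteratedFDeriv ℝ 1 j (x s) ![es] with hg
  set g1 : ℝ → ℝ := fun s => iteratedFDeriv ℝ 1 i (x s) ![e]
      + iteratedFDeriv ℝ 2 j (x s) ![e, pt] + iteratedFDeriv ℝ 1 j (x s) ![es]
      + s * iteratedFDeriv ℝ 2 j (x s) ![e, es] with hg1
  set g2 : ℝ → ℝ := fun s => iteratedFDeriv ℝ 2 i (x s) ![e, e]
      + iteratedFDeriv ℝ 3 j (x s) ![e, e, pt] + 2 * iteratedFDeriv ℝ 2 j (x s) ![e, es]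
      + s * iteratedFDeriv ℝ 3 j (x s) ![e, e, es] with hg2
  set g3 : ℝ → ℝ := fun s => iteratedFDeriv ℝ 3 i (x s) ![e, e, e]
      + iteratedFDeriv ℝ 4 j (x s) ![e, e, e, pt] + 3 * iteratedFDeriv ℝ 3 j (x s) ![e, e, es]
      + s * iteratedFDeriv ℝ 4 j (x s) ![e, e, e, es] with hg3
  have hi1 : ContDiff ℝ ((0:ℕ)+1) i := hi.of_le (by norm_num)
  have hi2 : ContDiff ℝ ((1:ℕ)+1) i := hi.of_le (by norm_num)
  have hi3 : ContDiff ℝ ((2:ℕ)+1) i := hi.of_le (by norm_num)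
  have hj1 : ContDiff ℝ ((0:ℕ)+1) j := hj.of_le (by norm_num)
  have hj2 : ContDiff ℝ ((1:ℕ)+1) j := hj.of_le (by norm_num)
  have hj3 : ContDiff ℝ ((2:ℕ)+1) j := hj.of_le (by norm_num)
  have hj4 : ContDiff ℝ ((3:ℕ)+1) j := hj.of_le (by norm_num)
  have h1 : ∀ s, HasDerivAt g (g1 s) s := by
    intro s
    have t1 : HasDerivAt (fun t : ℝ => iteratedFDeriv ℝ 0 i (x t) ![])
        (iteratedFDeriv ℝ 1 i (x s) ![e]) s :=
      hasDerivAt_iteratedFDeriv_line i 0 hi1 qt e ![] s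
    have t2 : HasDerivAt (fun t : ℝ => iteratedFDeriv ℝ 1 j (x t) ![pt])
        (iteratedFDeriv ℝ 2 j (x s) ![e, pt]) s :=
      hasDerivAt_iteratedFDeriv_line j 1 hj2 qt e ![pt] s
    have t3 : HasDerivAt (fun t : ℝ => iteratedFDeriv ℝ 1 j (x t) ![es])
        (iteratedFDeriv ℝ 2 j (x s) ![e, es]) s :=
      hasDerivAt_iteratedFDeriv_line j 1 hj2 qt e ![es] s
    have H := (t1.add t2).add ((hasDerivAt_id s).mul t3)
    refine H.congr_deriv ?_
    simp [hg1]; ring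
  have h2 : ∀ s, HasDerivAt g1 (g2 s) s := by
    intro s
    have t1 : HasDerivAt (fun t : ℝ => iteratedFDeriv ℝ 1 i (x t) ![e])
        (iteratedFDeriv ℝ 2 i (x s) ![e, e]) s :=
      hasDerivAt_iteratedFDeriv_line i 1 hi2 qt e ![e] s
    have t2 : HasDerivAt (fun t : ℝ => iteratedFDeriv ℝ 2 j (x t) ![e, pt])
        (iteratedFDeriv ℝ 3 j (x s) ![e, e, pt]) s :=
      hasDerivAt_iteratedFDeriv_line j 2 hj3 qt e ![e, pt] s
    have t3 : HasDerivAt (fun t : ℝ => iteratedFDeriv ℝ 1 j (x t) ![es])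
        (iteratedFDeriv ℝ 2 j (x s) ![e, es]) s :=
      hasDerivAt_iteratedFDeriv_line j 1 hj2 qt e ![es] s
    have t4 : HasDerivAt (fun t : ℝ => iteratedFDeriv ℝ 2 j (x t) ![e, es])
        (iteratedFDeriv ℝ 3 j (x s) ![e, e, es]) s :=
      hasDerivAt_iteratedFDeriv_line j 2 hj3 qt e ![e, es] s
    have H := ((t1.add t2).add t3).add ((hasDerivAt_id s).mul t4)
    refine H.congr_deriv ?_
    simp [hg2]; ring
  have h3 : ∀ s, HasDerivAt g2 (g3 s) s := by
    intro s
    have t1 : HasDerivAt (fun t : ℝ => iteratedFDeriv ℝ 2 i (x t) ![e, e])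
        (iteratedFDeriv ℝ 3 i (x s) ![e, e, e]) s :=
      hasDerivAt_iteratedFDeriv_line i 2 hi3 qt e ![e, e] s
    have t2 : HasDerivAt (fun t : ℝ => iteratedFDeriv ℝ 3 j (x t) ![e, e, pt])
        (iteratedFDeriv ℝ 4 j (x s) ![e, e, e, pt]) s :=
      hasDerivAt_iteratedFDeriv_line j 3 hj4 qt e ![e, e, pt] s
    have t3 : HasDerivAt (fun t : ℝ => iteratedFDeriv ℝ 2 j (x t) ![e, es])
        (iteratedFDeriv ℝ 3 j (x s) ![e, e, es]) s :=
      hasDerivAt_iteratedFDeriv_line j 2 hj3 qt e ![e, es] s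
    have t4 : HasDerivAt (fun t : ℝ => iteratedFDeriv ℝ 3 j (x t) ![e, e, es])
        (iteratedFDeriv ℝ 4 j (x s) ![e, e, e, es]) s :=
      hasDerivAt_iteratedFDeriv_line j 3 hj4 qt e ![e, e, es] s
    have H := ((t1.add t2).add (t3.const_mul 2)).add ((hasDerivAt_id s).mul t4)
    refine H.congr_deriv ?_
    simp [hg3]; ring
  have hc3 : Continuous g3 := by
    have c1 := continuous_iteratedFDeriv_line i 3 hi qt e ![e, e, e]
    have c2 := continuous_iteratedFDeriv_line j 4 hj qt e ![e, e, e, pt]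
    have c3 := continuous_iteratedFDeriv_line j 3 (hj.of_le (by norm_num)) qt e ![e, e, es]
    have c4 := continuous_iteratedFDeriv_line j 4 hj qt e ![e, e, e, es]
    exact ((c1.add c2).add (continuous_const.mul c3)).add (continuous_id.mul c4)
  have key := trapezoid_rule g g1 g2 g3 h1 h2 h3 hc3
  have hx0 : x 0 = qt := by simp [hx]
  have hx1 : x 1 = qbar := by simp [hx, he]
  -- endpoint values
  have hgee : g 1 - g 0 = i qbar - i qt - fderiv ℝ j qt pt := by
    simp only [hg, hx0, hx1, iteratedFDeriv_zero_apply, iteratedFDeriv_one_apply]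
    rw [hopt]
    simp
    ring
  have hg1zero : g1 1 = 0 := by
    simp only [hg1, hx1, one_mul]
    have hsplit : iteratedFDeriv ℝ 2 j qbar ![e, pt] + iteratedFDeriv ℝ 2 j qbar ![e, es]
        = iteratedFDeriv ℝ 2 j qbar ![e, pbar] := by
      rw [← ml2_add]
      congr 1
      simp [hes]
    rw [iteratedFDeriv_one_apply, iteratedFDeriv_one_apply, hopt]
    have := hadj e
    simp only [Matrix.cons_val_zero, ContinuousLinearMap.zero_apply]
    linarith [hsplit, this]
  have hg1zeroval : g1 0 = fderiv ℝ i qt e + iteratedFDeriv ℝ 2 j qt ![e, pt]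
      + fderiv ℝ j qt es := by
    simp [hg1, hx0, iteratedFDeriv_one_apply]
  -- integrand identification
  have hintegrand : (fun s : ℝ => g3 s * (s * (s - 1)))
      = fun s : ℝ =>
          ((iteratedFDeriv ℝ 3 i (qt + s • (qbar - qt)) fun _ => qbar - qt)
            + iteratedFDeriv ℝ 4 j (qt + s • (qbar - qt))
                ![qbar - qt, qbar - qt, qbar - qt, pt + s • (pbar - pt)]
            + 3 * iteratedFDeriv ℝ 3 j (qt + s • (qbar - qt))
                ![qbar - qt, qbar - qt, pbar - pt])
          * (s * (s - 1)) := by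
    funext s
    have hfun : (fun _ : Fin 3 => qbar - qt) = ![e, e, e] := by
      funext i0; fin_cases i0 <;> rfl
    rw [hfun]
    rw [ml4_last (iteratedFDeriv ℝ 4 j (x s)) e e e pt es s]
    simp only [hg3, he, hes, hx]
    ring
  rw [← hintegrand]
  rw [hg1zero, hg1zeroval] at key
  rw [hgee] at key
  linarith [key]
end

section
/- Let Q be a real normed vector space, i : Q → ℝ continuously Fréchet differentiable and j : Q → ℝ twice continuously Fréchet differentiable. Define m : Q × Q → ℝ by m(q, p) := i(q) + Dj(q)(p). Suppose q̄ ∈ Q satisfies Dj(q̄) = 0 and p̄ ∈ Q satisfies D²j(q̄)(δq, p̄) = −Di(q̄)(δq) for all δq ∈ Q. Then the Fréchet derivative of m at (q̄, p̄) vanishes: Dm(q̄, p̄)(δq, δp) = 0 for all δq, δp ∈ Q. -/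
/-- If `Dj(q̄) = 0` and `p̄` solves the reduced adjoint problem
`D²j(q̄)(δq, p̄) = −Di(q̄)(δq)` for all `δq`, then the Fréchet derivative of the
auxiliary functional `m(q,p) = i(q) + Dj(q)(p)` vanishes at `(q̄, p̄)`. -/
theorem auxiliary_functional_critical_point
    (Q : Type*) [NormedAddCommGroup Q] [NormedSpace ℝ Q]
    (i : Q → ℝ) (hi : ContDiff ℝ 1 i)
    (j : Q → ℝ) (hj : ContDiff ℝ 2 j)
    (m : Q × Q → ℝ) (hm : ∀ q p : Q, m (q, p) = i q + fderiv ℝ j q p)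
    (qbar pbar : Q)
    (hopt : fderiv ℝ j qbar = 0)
    (hadj : ∀ δq : Q, iteratedFDeriv ℝ 2 j qbar ![δq, pbar] = -(fderiv ℝ i qbar δq)) :
    ∀ δq δp : Q, fderiv ℝ m (qbar, pbar) (δq, δp) = 0 := by
  intro δq δp
  have hm' : m = fun x : Q × Q => i x.1 + fderiv ℝ j x.1 x.2 := by
    funext x; exact hm x.1 x.2
  have hdj : ContDiff ℝ 1 (fderiv ℝ j) := hj.fderiv_right (by norm_num)
  -- derivative of the i-part
  have hiq : HasFDerivAt (fun x : Q × Q => i x.1)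
      ((fderiv ℝ i qbar).comp (ContinuousLinearMap.fst ℝ Q Q)) (qbar, pbar) :=
    ((hi.differentiable one_ne_zero qbar).hasFDerivAt).comp (qbar, pbar) (hasFDerivAt_fst)
  -- derivative of q ↦ fderiv j q (as clm-valued map) along fst
  have hc : HasFDerivAt (fun x : Q × Q => fderiv ℝ j x.1)
      ((fderiv ℝ (fderiv ℝ j) qbar).comp (ContinuousLinearMap.fst ℝ Q Q)) (qbar, pbar) :=
    ((hdj.differentiable one_ne_zero qbar).hasFDerivAt).comp (qbar, pbar) (hasFDerivAt_fst)
  have hu : HasFDerivAt (fun x : Q × Q => x.2) (ContinuousLinearMap.snd ℝ Q Q) (qbar, pbar) :=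
    hasFDerivAt_snd
  have h2 := hc.clm_apply hu
  have hM : HasFDerivAt m
      (((fderiv ℝ i qbar).comp (ContinuousLinearMap.fst ℝ Q Q)) +
        ((fderiv ℝ j qbar).comp (ContinuousLinearMap.snd ℝ Q Q) +
          (((fderiv ℝ (fderiv ℝ j) qbar).comp (ContinuousLinearMap.fst ℝ Q Q)).flip pbar)))
      (qbar, pbar) := by
    rw [hm']
    exact hiq.add h2
  have key := hM.fderiv
  rw [key]
  have hsecond : fderiv ℝ (fderiv ℝ j) qbar δq pbar = -(fderiv ℝ i qbar δq) := by
    rw [← hadj δq, iteratedFDeriv_two_apply]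
    simp
  simp [hopt, hsecond]
end

section
/- (Abstract form of the Localizable Error Representation) Let W be a real normed vector space, L : W → ℝ four times continuously Fréchet differentiable, and I : W → ℝ three times continuously Fréchet differentiable. Suppose ξ̄ ∈ W satisfies DL(ξ̄) = 0, and ξ̄* ∈ W solves the adjoint problem D²L(ξ̄)(δξ, ξ̄*) = −DI(ξ̄)(δξ) for all δξ ∈ W. Then for arbitrary fixed ξ̃, ξ̃* ∈ W, setting ē := ξ̄ − ξ̃ and ē* := ξ̄* − ξ̃*, one has: I(ξ̄) − I(ξ̃) = (1/2)·[ DL(ξ̃)(ē*) + DI(ξ̃)(ē) + D²L(ξ̃)(ē, ξ̃*) ] + DL(ξ̃)(ξ̃*) + R̃⁽³⁾, where R̃⁽³⁾ = (1/2) ∫₀¹ [ D³I(ξ̃ + s·ē)(ē, ē, ē) + D⁴L(ξ̃ + s·ē)(ē, ē, ē, ξ̃* + s·ē*) + 3·D³L(ξ̃ + s·ē)(ē, ē, ē*) ] · s(s−1) ds. -/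
private lemma hasDerivAt_line_itfd {W : Type*} [NormedAddCommGroup W] [NormedSpace ℝ W]
    {N : WithTop ℕ∞} {f : W → ℝ} (hf : ContDiff ℝ N f) {n : ℕ} (hn : (n : WithTop ℕ∞) < N)
    (x0 e : W) (m : Fin n → W) (s : ℝ) :
    HasDerivAt (fun t : ℝ => iteratedFDeriv ℝ n f (x0 + t • e) m)
      (iteratedFDeriv ℝ (n + 1) f (x0 + s • e) (Matrix.vecCons e m)) s := by
  have hc : HasDerivAt (fun t : ℝ => x0 + t • e) e s := by
    simpa using ((hasDerivAt_id s).smul_const e).const_add x0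
  have hF : HasFDerivAt (iteratedFDeriv ℝ n f)
      (fderiv ℝ (iteratedFDeriv ℝ n f) (x0 + s • e)) (x0 + s • e) :=
    (hf.differentiable_iteratedFDeriv hn _).hasFDerivAt
  have h3 := (ContinuousMultilinearMap.apply ℝ (fun _ : Fin n => W) ℝ
      m).hasFDerivAt.comp_hasDerivAt s (hF.comp_hasDerivAt s hc)
  simp only [Function.comp_def, ContinuousMultilinearMap.apply_apply] at h3
  rw [iteratedFDeriv_succ_apply_left]
  simpa using h3

private lemma continuous_line_itfd {W : Type*} [NormedAddCommGroup W] [NormedSpace ℝ W]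
    {N : WithTop ℕ∞} {f : W → ℝ} (hf : ContDiff ℝ N f) {n : ℕ} (hn : (n : WithTop ℕ∞) ≤ N)
    (x0 e : W) (m : Fin n → W) :
    Continuous (fun t : ℝ => iteratedFDeriv ℝ n f (x0 + t • e) m) :=
  (ContinuousMultilinearMap.apply ℝ (fun _ : Fin n => W) ℝ m).continuous.comp
    ((hf.continuous_iteratedFDeriv hn).comp (by continuity))

private lemma cmm2_add {W : Type*} [NormedAddCommGroup W] [NormedSpace ℝ W]
    (T : ContinuousMultilinearMap ℝ (fun _ : Fin 2 => W) ℝ) (e1 a b : W) :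
    T ![e1, a + b] = T ![e1, a] + T ![e1, b] := by
  have h : ∀ x : W, ![e1, x] = Function.update ![e1, (0:W)] 1 x := by
    intro x; funext i; fin_cases i <;> simp
  rw [h, h a, h b, T.map_update_add]

private lemma cmm4_split {W : Type*} [NormedAddCommGroup W] [NormedSpace ℝ W]
    (T : ContinuousMultilinearMap ℝ (fun _ : Fin 4 => W) ℝ) (e1 e2 e3 a b : W) (s : ℝ) :
    T ![e1, e2, e3, a + s • b] = T ![e1, e2, e3, a] + s * T ![e1, e2, e3, b] := by
  have h : ∀ x : W, ![e1, e2, e3, x] = Function.update ![e1, e2, e3, (0:W)] 3 x := by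
    intro x; funext i; fin_cases i <;> simp
  rw [h, h a, h b, T.map_update_add, T.map_update_smul, smul_eq_mul]

/-- Abstract form of the localizable error representation (Theorem 2 of the paper).
If `DL(ξ̄) = 0` and `ξ̄*` solves the adjoint problem
`D²L(ξ̄)(δξ, ξ̄*) = −DI(ξ̄)(δξ)` for all `δξ`, then for arbitrary `ξ̃, ξ̃*`,
with `ē := ξ̄ − ξ̃` and `ē* := ξ̄* − ξ̃*`,
`I(ξ̄) − I(ξ̃) = (1/2)[DL(ξ̃)(ē*) + DI(ξ̃)(ē) + D²L(ξ̃)(ē, ξ̃*)] + DL(ξ̃)(ξ̃*) + R̃⁽³⁾`,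
where `R̃⁽³⁾ = (1/2)∫₀¹ [D³I(ξ̃+sē)(ē,ē,ē) + D⁴L(ξ̃+sē)(ē,ē,ē,ξ̃*+sē*) + 3 D³L(ξ̃+sē)(ē,ē,ē*)] s(s−1) ds`. -/
theorem localizable_error_representation
    (W : Type*) [NormedAddCommGroup W] [NormedSpace ℝ W]
    (L : W → ℝ) (hL : ContDiff ℝ 4 L)
    (I : W → ℝ) (hI : ContDiff ℝ 3 I)
    (ξbar ξstar : W)
    (hopt : fderiv ℝ L ξbar = 0)
    (hadj : ∀ δξ : W, iteratedFDeriv ℝ 2 L ξbar ![δξ, ξstar] = -(fderiv ℝ I ξbar δξ))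
    (ξt ξtstar : W) :
    I ξbar - I ξt
      = (1 / 2) * (fderiv ℝ L ξt (ξstar - ξtstar)
            + fderiv ℝ I ξt (ξbar - ξt)
            + iteratedFDeriv ℝ 2 L ξt ![ξbar - ξt, ξtstar])
        + fderiv ℝ L ξt ξtstar
        + (1 / 2) * ∫ s in (0:ℝ)..1,
            ((iteratedFDeriv ℝ 3 I (ξt + s • (ξbar - ξt)) fun _ => ξbar - ξt)
              + iteratedFDeriv ℝ 4 L (ξt + s • (ξbar - ξt))
                  ![ξbar - ξt, ξbar - ξt, ξbar - ξt, ξtstar + s • (ξstar - ξtstar)]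
              + 3 * iteratedFDeriv ℝ 3 L (ξt + s • (ξbar - ξt))
                  ![ξbar - ξt, ξbar - ξt, ξstar - ξtstar])
            * (s * (s - 1)) := by
  set e := ξbar - ξt with he
  set p := ξstar - ξtstar with hp
  -- specialized derivative facts
  have dI0 : ∀ s : ℝ, HasDerivAt (fun t : ℝ => I (ξt + t • e))
      (iteratedFDeriv ℝ 1 I (ξt + s • e) ![e]) s := by
    intro s
    have h := hasDerivAt_line_itfd hI (by norm_num) ξt e ![] s
    simpa only [iteratedFDeriv_zero_apply] using h
  have dI1 : ∀ s : ℝ, HasDerivAt (fun t : ℝ => iteratedFDeriv ℝ 1 I (ξt + t • e) ![e])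
      (iteratedFDeriv ℝ 2 I (ξt + s • e) ![e, e]) s :=
    fun s => hasDerivAt_line_itfd hI (by norm_num) ξt e ![e] s
  have dI2 : ∀ s : ℝ, HasDerivAt (fun t : ℝ => iteratedFDeriv ℝ 2 I (ξt + t • e) ![e, e])
      (iteratedFDeriv ℝ 3 I (ξt + s • e) ![e, e, e]) s :=
    fun s => hasDerivAt_line_itfd hI (by norm_num) ξt e ![e, e] s
  have dL1 : ∀ (w : W) (s : ℝ),
      HasDerivAt (fun t : ℝ => iteratedFDeriv ℝ 1 L (ξt + t • e) ![w])
        (iteratedFDeriv ℝ 2 L (ξt + s • e) ![e, w]) s :=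
    fun w s => hasDerivAt_line_itfd hL (by norm_num) ξt e ![w] s
  have dL2 : ∀ (w : W) (s : ℝ),
      HasDerivAt (fun t : ℝ => iteratedFDeriv ℝ 2 L (ξt + t • e) ![e, w])
        (iteratedFDeriv ℝ 3 L (ξt + s • e) ![e, e, w]) s :=
    fun w s => hasDerivAt_line_itfd hL (by norm_num) ξt e ![e, w] s
  have dL3 : ∀ (w : W) (s : ℝ),
      HasDerivAt (fun t : ℝ => iteratedFDeriv ℝ 3 L (ξt + t • e) ![e, e, w])
        (iteratedFDeriv ℝ 4 L (ξt + s • e) ![e, e, e, w]) s :=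
    fun w s => hasDerivAt_line_itfd hL (by norm_num) ξt e ![e, e, w] s
  have dL0 : ∀ s : ℝ, HasDerivAt (fun t : ℝ => L (ξt + t • e))
      (iteratedFDeriv ℝ 1 L (ξt + s • e) ![e]) s := by
    intro s
    have h := hasDerivAt_line_itfd hL (by norm_num) ξt e ![] s
    simpa only [iteratedFDeriv_zero_apply] using h
  -- the auxiliary functions
  set g0 : ℝ → ℝ := fun s => I (ξt + s • e) + iteratedFDeriv ℝ 1 L (ξt + s • e) ![ξtstar]
      + s * iteratedFDeriv ℝ 1 L (ξt + s • e) ![p] with hg0def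
  set g1 : ℝ → ℝ := fun s => iteratedFDeriv ℝ 1 I (ξt + s • e) ![e]
      + iteratedFDeriv ℝ 2 L (ξt + s • e) ![e, ξtstar]
      + s * iteratedFDeriv ℝ 2 L (ξt + s • e) ![e, p]
      + iteratedFDeriv ℝ 1 L (ξt + s • e) ![p] with hg1def
  set g2 : ℝ → ℝ := fun s => iteratedFDeriv ℝ 2 I (ξt + s • e) ![e, e]
      + iteratedFDeriv ℝ 3 L (ξt + s • e) ![e, e, ξtstar]
      + s * iteratedFDeriv ℝ 3 L (ξt + s • e) ![e, e, p]
      + 2 * iteratedFDeriv ℝ 2 L (ξt + s • e) ![e, p] with hg2def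
  set g3 : ℝ → ℝ := fun s => iteratedFDeriv ℝ 3 I (ξt + s • e) ![e, e, e]
      + iteratedFDeriv ℝ 4 L (ξt + s • e) ![e, e, e, ξtstar]
      + s * iteratedFDeriv ℝ 4 L (ξt + s • e) ![e, e, e, p]
      + 3 * iteratedFDeriv ℝ 3 L (ξt + s • e) ![e, e, p] with hg3def
  have D0 : ∀ s : ℝ, HasDerivAt g0 (g1 s) s := by
    intro s
    simp only [hg0def, hg1def]
    have H := ((dI0 s).add (dL1 ξtstar s)).add ((hasDerivAt_id s).mul (dL1 p s))
    refine H.congr_deriv ?_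
    try simp only [id_eq]
    ring
  have D1 : ∀ s : ℝ, HasDerivAt g1 (g2 s) s := by
    intro s
    simp only [hg1def, hg2def]
    have H := (((dI1 s).add (dL2 ξtstar s)).add ((hasDerivAt_id s).mul (dL2 p s))).add (dL1 p s)
    refine H.congr_deriv ?_
    try simp only [id_eq]
    ring
  have D2 : ∀ s : ℝ, HasDerivAt g2 (g3 s) s := by
    intro s
    simp only [hg2def, hg3def]
    have H := (((dI2 s).add (dL3 ξtstar s)).add ((hasDerivAt_id s).mul (dL3 p s))).add
      ((dL2 p s).const_mul 2)
    refine H.congr_deriv ?_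
    try simp only [id_eq]
    ring
  set Φ : ℝ → ℝ := fun s => g2 s * (s * (s - 1)) - g1 s * (2 * s - 1) + 2 * g0 s with hΦdef
  have hΦ : ∀ s : ℝ, HasDerivAt Φ (g3 s * (s * (s - 1))) s := by
    intro s
    have hpoly1 : HasDerivAt (fun s : ℝ => s * (s - 1)) (2 * s - 1) s := by
      have h := (hasDerivAt_id s).mul ((hasDerivAt_id s).sub_const 1)
      simp only [id_eq, one_mul, mul_one] at h
      refine h.congr_deriv ?_
      ring
    have hpoly2 : HasDerivAt (fun s : ℝ => 2 * s - 1) 2 s := by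
      have h := ((hasDerivAt_id s).const_mul 2).sub_const 1
      simpa only [id_eq, mul_one] using h
    simp only [hΦdef]
    have H := (((D2 s).mul hpoly1).sub ((D1 s).mul hpoly2)).add ((D0 s).const_mul 2)
    refine H.congr_deriv ?_
    try simp only [id_eq]
    ring
  have hcont3 : Continuous g3 := by
    simp only [hg3def]
    exact (((continuous_line_itfd hI (by norm_num) ξt e ![e, e, e]).add
        (continuous_line_itfd hL (by norm_num) ξt e ![e, e, e, ξtstar])).add
        (continuous_id.mul (continuous_line_itfd hL (by norm_num) ξt e ![e, e, e, p]))).add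
        (continuous_const.mul (continuous_line_itfd hL (by norm_num) ξt e ![e, e, p]))
  have hInt : IntervalIntegrable (fun s => g3 s * (s * (s - 1))) MeasureTheory.volume 0 1 :=
    (hcont3.mul (by continuity)).intervalIntegrable 0 1
  have key : (∫ s in (0:ℝ)..1, g3 s * (s * (s - 1))) = Φ 1 - Φ 0 :=
    intervalIntegral.integral_eq_sub_of_hasDerivAt (fun s _ => hΦ s) hInt
  -- endpoint values
  have hc0 : ξt + (0:ℝ) • e = ξt := by simp
  have hc1 : ξt + (1:ℝ) • e = ξbar := by simp [he]
  have hL1bar : ∀ w : W, iteratedFDeriv ℝ 1 L ξbar ![w] = 0 := by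
    intro w
    rw [iteratedFDeriv_one_apply, hopt]
    rfl
  have hg0_1 : g0 1 = I ξbar := by
    simp only [hg0def, hc1, hL1bar]
    ring
  have hg0_0 : g0 0 = I ξt + fderiv ℝ L ξt ξtstar := by
    simp only [hg0def, hc0, iteratedFDeriv_one_apply]
    simp
  have hg1_1 : g1 1 = 0 := by
    have hx : ξtstar + p = ξstar := by simp [hp]
    have h2 : iteratedFDeriv ℝ 2 L ξbar ![e, ξtstar] + iteratedFDeriv ℝ 2 L ξbar ![e, p]
        = -(fderiv ℝ I ξbar e) := by
      rw [← cmm2_add, hx, hadj e]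
    simp only [hg1def, hc1, iteratedFDeriv_one_apply, hopt,
      ContinuousLinearMap.zero_apply, Matrix.cons_val_zero, one_mul, add_zero]
    linarith [h2]
  have hg1_0 : g1 0 = fderiv ℝ I ξt e + iteratedFDeriv ℝ 2 L ξt ![e, ξtstar]
      + fderiv ℝ L ξt p := by
    simp only [hg1def, hc0, iteratedFDeriv_one_apply]
    simp
  -- rewrite the goal's integral
  have hintrw : (∫ s in (0:ℝ)..1,
        ((iteratedFDeriv ℝ 3 I (ξt + s • e) fun _ => e)
          + iteratedFDeriv ℝ 4 L (ξt + s • e) ![e, e, e, ξtstar + s • p]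
          + 3 * iteratedFDeriv ℝ 3 L (ξt + s • e) ![e, e, p]) * (s * (s - 1)))
      = ∫ s in (0:ℝ)..1, g3 s * (s * (s - 1)) := by
    apply intervalIntegral.integral_congr
    intro s _
    have hv : (fun _ : Fin 3 => e) = ![e, e, e] := by
      funext i; fin_cases i <;> rfl
    simp only [hg3def]
    rw [hv, cmm4_split (iteratedFDeriv ℝ 4 L (ξt + s • e)) e e e ξtstar p s]
    ring
  rw [hintrw, key]
  simp only [hΦdef]
  rw [hg0_1, hg0_0, hg1_1, hg1_0]
  ring
end

section
/- (Lemma on the adjoint optimality system) Let U, Q, V be real normed vector spaces. Let A : U × Q → V* (where V* is the space of continuous linear functionals on V) be twice continuously Fréchet differentiable, J : U × Q → ℝ twice continuously Fréchet differentiable, I : U × Q → ℝ continuously Fréchet differentiable, and S : Q → U twice continuously Fréchet differentiable with A(S(q), q) = 0 for all q ∈ Q. Define the Lagrangian L(u, q, z) := J(u, q) − A(u, q)(z), the reduced functionals j(q) := J(S(q), q) and i(q) := I(S(q), q). Let q̄ ∈ Q, ū := S(q̄), and let z̄ ∈ V satisfy the adjoint state equation: D_uJ(ū, q̄)(δu)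 − D_uA(ū, q̄)(δu)(z̄) = 0 for all δu ∈ U. Let p̄ ∈ Q solve the reduced adjoint problem D²j(q̄)(δq, p̄) = −Di(q̄)(δq) for all δq ∈ Q, set v̄ := DS(q̄)(p̄), and suppose ȳ ∈ V satisfies the first row of the adjoint optimality system: for all δu ∈ U, D²L(ū,q̄,z̄)((δu,0,0),(v̄,p̄,ȳ)) = −D_uI(ū,q̄)(δu). Then the remaining two rows hold as well: for all δq ∈ Q, D²L(ū,q̄,z̄)((0,δq,0),(v̄,p̄,ȳ)) = −D_qI(ū,q̄)(δq), and for all δz ∈ V, D²L(ū,q̄,z̄)((0,0,δz),(v̄,p̄,ȳ)) = 0; that is, (v̄, p̄, ȳ) solves the full adjoint optimality system D²L(ū,q̄,z̄)(δξ, (v̄,p̄,ȳ)) = −DI(ū,q̄)(δu,δq) for all δξ = (δu,δq,δz). -/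
set_option maxHeartbeats 2000000

lemma clm_comp_fderiv2 {E F G : Type*} [NormedAddCommGroup E] [NormedSpace ℝ E]
    [NormedAddCommGroup F] [NormedSpace ℝ F] [NormedAddCommGroup G] [NormedSpace ℝ G]
    (M : F →L[ℝ] G) (f : E → F) (x : E) (hf : DifferentiableAt ℝ f x) :
    fderiv ℝ (fun y => M (f y)) x = M.comp (fderiv ℝ f x) :=
  (M.hasFDerivAt.comp x hf.hasFDerivAt).fderiv

lemma clm_comp_diff2 {E F G : Type*} [NormedAddCommGroup E] [NormedSpace ℝ E]
    [NormedAddCommGroup F] [NormedSpace ℝ F] [NormedAddCommGroup G] [NormedSpace ℝ G]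
    (M : F →L[ℝ] G) (f : E → F) (x : E) (hf : DifferentiableAt ℝ f x) :
    DifferentiableAt ℝ (fun y => M (f y)) x :=
  (M.hasFDerivAt.comp x hf.hasFDerivAt).differentiableAt

open ContinuousLinearMap in
lemma chain2_aux {E F W : Type*} [NormedAddCommGroup E] [NormedSpace ℝ E]
    [NormedAddCommGroup F] [NormedSpace ℝ F] [NormedAddCommGroup W] [NormedSpace ℝ W]
    (g : F → W) (G : E → F) (hg : ContDiff ℝ 2 g) (hG : ContDiff ℝ 2 G) (x a b : E) :
    fderiv ℝ (fderiv ℝ (fun y => g (G y))) x a b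
      = fderiv ℝ (fderiv ℝ g) (G x) (fderiv ℝ G x a) (fderiv ℝ G x b)
        + fderiv ℝ g (G x) (fderiv ℝ (fderiv ℝ G) x a b) := by
  have hgd : Differentiable ℝ g := hg.differentiable two_ne_zero
  have hGd : Differentiable ℝ G := hG.differentiable two_ne_zero
  have hg' : ContDiff ℝ 1 (fderiv ℝ g) := hg.fderiv_right (by norm_num)
  have hG' : ContDiff ℝ 1 (fderiv ℝ G) := hG.fderiv_right (by norm_num)
  have hc : DifferentiableAt ℝ (fun y => fderiv ℝ g (G y)) x :=
    ((hg'.differentiable one_ne_zero (G x)).comp x (hGd x))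
  have hd : DifferentiableAt ℝ (fderiv ℝ G) x := hG'.differentiable one_ne_zero x
  have h1 : fderiv ℝ (fun y => g (G y)) = fun y => (fderiv ℝ g (G y)).comp (fderiv ℝ G y) := by
    funext y
    exact fderiv_comp y (hgd (G y)) (hGd y)
  have hc' : fderiv ℝ (fun y => fderiv ℝ g (G y)) x
      = (fderiv ℝ (fderiv ℝ g) (G x)).comp (fderiv ℝ G x) :=
    fderiv_comp x (hg'.differentiable one_ne_zero (G x)) (hGd x)
  rw [h1, fderiv_clm_comp hc hd]
  simp [hc', add_comm]

open ContinuousLinearMap in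
lemma app2_aux {W V : Type*} [NormedAddCommGroup W] [NormedSpace ℝ W]
    [NormedAddCommGroup V] [NormedSpace ℝ V]
    (c : W → (V →L[ℝ] ℝ)) (hc : ContDiff ℝ 2 c) (ζ : W →L[ℝ] V) (x a b : W) :
    fderiv ℝ (fderiv ℝ (fun w => c w (ζ w))) x a b
      = fderiv ℝ (fderiv ℝ c) x a b (ζ x) + fderiv ℝ c x a (ζ b) + fderiv ℝ c x b (ζ a) := by
  have hcd : Differentiable ℝ c := hc.differentiable two_ne_zero
  have hc1 : ContDiff ℝ 1 (fderiv ℝ c) := hc.fderiv_right (by norm_num)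
  let Mf : (W →L[ℝ] V →L[ℝ] ℝ) →L[ℝ] (V →L[ℝ] W →L[ℝ] ℝ) :=
    (flipₗᵢ ℝ W V ℝ).toLinearIsometry.toContinuousLinearMap
  let Mc : (V →L[ℝ] ℝ) →L[ℝ] (W →L[ℝ] ℝ) := (compL ℝ W V ℝ).flip ζ
  have hMfa : ∀ T : W →L[ℝ] V →L[ℝ] ℝ, Mf T = T.flip := fun T => rfl
  have hMca : ∀ T : V →L[ℝ] ℝ, Mc T = T.comp ζ := fun T => rfl
  have hfc : (fun y => (c y).comp ζ) = fun y => Mc (c y) := by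
    funext y; rw [hMca]
  have hff : (fun y => (fderiv ℝ c y).flip) = fun y => Mf (fderiv ℝ c y) := by
    funext y; rw [hMfa]
  have h1 : fderiv ℝ (fun w => c w (ζ w))
      = fun y => (c y).comp ζ + (fderiv ℝ c y).flip (ζ y) := by
    funext y
    rw [fderiv_clm_apply (hcd y) (ζ.differentiableAt), ζ.fderiv]
  rw [h1]
  have hdiff1 : DifferentiableAt ℝ (fun y => (c y).comp ζ) x := by
    rw [hfc]
    exact clm_comp_diff2 (E := W) (F := V →L[ℝ] ℝ) (G := W →L[ℝ] ℝ) Mc c x (hcd x)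
  have hflipc : DifferentiableAt ℝ (fun y => (fderiv ℝ c y).flip) x := by
    rw [hff]
    exact clm_comp_diff2 (E := W) (F := W →L[ℝ] V →L[ℝ] ℝ) (G := V →L[ℝ] W →L[ℝ] ℝ)
      Mf (fderiv ℝ c) x (hc1.differentiable one_ne_zero x)
  have hdiff2 : DifferentiableAt ℝ (fun y => (fderiv ℝ c y).flip (ζ y)) x :=
    hflipc.clm_apply ζ.differentiableAt
  rw [fderiv_fun_add hdiff1 hdiff2]
  have e1 : fderiv ℝ (fun y => (c y).comp ζ) x a b = fderiv ℝ c x a (ζ b) := by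
    rw [hfc, clm_comp_fderiv2 (E := W) (F := V →L[ℝ] ℝ) (G := W →L[ℝ] ℝ) Mc c x (hcd x)]
    simp only [ContinuousLinearMap.comp_apply, hMca]
  have e2 : fderiv ℝ (fun y => (fderiv ℝ c y).flip (ζ y)) x a b
      = fderiv ℝ c x b (ζ a) + fderiv ℝ (fderiv ℝ c) x a b (ζ x) := by
    rw [fderiv_clm_apply hflipc ζ.differentiableAt, ζ.fderiv]
    rw [hff, clm_comp_fderiv2 (E := W) (F := W →L[ℝ] V →L[ℝ] ℝ) (G := V →L[ℝ] W →L[ℝ] ℝ)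
      Mf (fderiv ℝ c) x (hc1.differentiable one_ne_zero x)]
    simp only [ContinuousLinearMap.add_apply, ContinuousLinearMap.comp_apply,
      ContinuousLinearMap.flip_apply, hMfa, hMca]
  rw [ContinuousLinearMap.add_apply, ContinuousLinearMap.add_apply, e1, e2]
  ring

lemma pair_fderiv {E F : Type*} [NormedAddCommGroup E] [NormedSpace ℝ E]
    [NormedAddCommGroup F] [NormedSpace ℝ F]
    (S : E → F) (hS : Differentiable ℝ S) (q : E) :
    fderiv ℝ (fun q => (S q, q)) q = (fderiv ℝ S q).prod (ContinuousLinearMap.id ℝ E) := by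
  have h := DifferentiableAt.fderiv_prodMk (f₁ := S) (f₂ := fun q => q) (hS q) differentiableAt_fun_id
  rw [h, fderiv_fun_id]

lemma pair_fderiv2 {E F : Type*} [NormedAddCommGroup E] [NormedSpace ℝ E]
    [NormedAddCommGroup F] [NormedSpace ℝ F]
    (S : E → F) (hS : ContDiff ℝ 2 S) (x a b : E) :
    fderiv ℝ (fderiv ℝ (fun q => (S q, q))) x a b = (fderiv ℝ (fderiv ℝ S) x a b, 0) := by
  have hS1 : ContDiff ℝ 1 (fderiv ℝ S) := hS.fderiv_right (by norm_num)
  let Minl : (E →L[ℝ] F) →L[ℝ] (E →L[ℝ] F × E) :=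
    ContinuousLinearMap.compL ℝ E F (F × E) (ContinuousLinearMap.inl ℝ F E)
  have hM : ∀ T : E →L[ℝ] F, Minl T = (ContinuousLinearMap.inl ℝ F E).comp T := fun T => rfl
  have h1 : fderiv ℝ (fun q => (S q, q))
      = fun q => Minl (fderiv ℝ S q) + ContinuousLinearMap.inr ℝ F E := by
    funext q
    rw [pair_fderiv S (hS.differentiable two_ne_zero) q]
    ext v <;> simp [hM, Prod.ext_iff]
  rw [h1]
  have hdiff1 : DifferentiableAt ℝ (fun q => Minl (fderiv ℝ S q)) x :=
    clm_comp_diff2 (E := E) (F := E →L[ℝ] F) (G := E →L[ℝ] F × E) Minl (fderiv ℝ S) x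
      (hS1.differentiable one_ne_zero x)
  rw [fderiv_fun_add hdiff1 (differentiableAt_const _)]
  rw [clm_comp_fderiv2 (E := E) (F := E →L[ℝ] F) (G := E →L[ℝ] F × E) Minl (fderiv ℝ S) x
      (hS1.differentiable one_ne_zero x)]
  rw [fderiv_fun_const]
  simp [hM, Prod.ext_iff]

section proj
variable {U Q V : Type*} [NormedAddCommGroup U] [NormedSpace ℝ U]
    [NormedAddCommGroup Q] [NormedSpace ℝ Q]
    [NormedAddCommGroup V] [NormedSpace ℝ V]

noncomputable def projUQ (U Q V : Type*) [NormedAddCommGroup U] [NormedSpace ℝ U]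
    [NormedAddCommGroup Q] [NormedSpace ℝ Q]
    [NormedAddCommGroup V] [NormedSpace ℝ V] : (U × Q × V) →L[ℝ] U × Q :=
  (ContinuousLinearMap.fst ℝ U (Q × V)).prod
    ((ContinuousLinearMap.fst ℝ Q V).comp (ContinuousLinearMap.snd ℝ U (Q × V)))

lemma projUQ_apply (w : U × Q × V) : projUQ U Q V w = (w.1, w.2.1) := rfl

lemma proj_cd : ContDiff ℝ 2 (fun w : U × Q × V => (w.1, w.2.1)) :=
  contDiff_fst.prodMk (contDiff_fst.comp contDiff_snd)

lemma proj_fderiv (x : U × Q × V) :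
    fderiv ℝ (fun w : U × Q × V => (w.1, w.2.1)) x = projUQ U Q V := by
  have hco : ⇑(projUQ U Q V) = fun w : U × Q × V => (w.1, w.2.1) := rfl
  rw [← hco]
  exact (projUQ U Q V).fderiv

lemma proj_fderiv2 (x a b : U × Q × V) :
    fderiv ℝ (fderiv ℝ (fun w : U × Q × V => (w.1, w.2.1))) x a b = 0 := by
  have h : fderiv ℝ (fun w : U × Q × V => (w.1, w.2.1)) = fun _ => projUQ U Q V :=
    funext proj_fderiv
  rw [h, fderiv_fun_const]
  simp

end proj

/-- Lemma on the adjoint optimality system (Lemma 1 of the paper). With the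
Lagrangian `L(u,q,z) = J(u,q) − A(u,q)(z)`, reduced functionals `j(q) = J(S(q),q)`
and `i(q) = I(S(q),q)`, adjoint state `z̄`, reduced adjoint `p̄`, `v̄ := DS(q̄)(p̄)`,
and `ȳ` satisfying the first row of the adjoint optimality system, the triple
`(v̄, p̄, ȳ)` solves the full adjoint optimality system
`D²L(ū,q̄,z̄)(δξ, (v̄,p̄,ȳ)) = −DI(ū,q̄)(δu,δq)` for all `δξ = (δu,δq,δz)`. -/
theorem adjoint_optimality_system_lemma
    (U Q V : Type*) [NormedAddCommGroup U] [NormedSpace ℝ U]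
    [NormedAddCommGroup Q] [NormedSpace ℝ Q]
    [NormedAddCommGroup V] [NormedSpace ℝ V]
    (A : U × Q → V →L[ℝ] ℝ) (hA : ContDiff ℝ 2 A)
    (J : U × Q → ℝ) (hJ : ContDiff ℝ 2 J)
    (I : U × Q → ℝ) (hI : ContDiff ℝ 1 I)
    (S : Q → U) (hS : ContDiff ℝ 2 S)
    (hstate : ∀ q : Q, A (S q, q) = 0)
    (L : U × Q × V → ℝ) (hL : ∀ (u : U) (q : Q) (z : V), L (u, q, z) = J (u, q) - A (u, q) z)
    (j : Q → ℝ) (hj : ∀ q : Q, j q = J (S q, q))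
    (i : Q → ℝ) (hi : ∀ q : Q, i q = I (S q, q))
    (qbar : Q) (ubar : U) (hubar : ubar = S qbar)
    (zbar : V)
    (hzbar : ∀ δu : U,
      fderiv ℝ J (ubar, qbar) (δu, (0 : Q))
        - fderiv ℝ A (ubar, qbar) (δu, (0 : Q)) zbar = 0)
    (pbar : Q)
    (hpbar : ∀ δq : Q,
      iteratedFDeriv ℝ 2 j qbar ![δq, pbar] = -(fderiv ℝ i qbar δq))
    (vbar : U) (hvbar : vbar = fderiv ℝ S qbar pbar)
    (ybar : V)
    (hybar : ∀ δu : U,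
      iteratedFDeriv ℝ 2 L (ubar, qbar, zbar)
          ![((δu, (0 : Q), (0 : V)) : U × Q × V), (vbar, pbar, ybar)]
        = -(fderiv ℝ I (ubar, qbar) (δu, (0 : Q)))) :
    (∀ δq : Q,
        iteratedFDeriv ℝ 2 L (ubar, qbar, zbar)
            ![(((0 : U), δq, (0 : V)) : U × Q × V), (vbar, pbar, ybar)]
          = -(fderiv ℝ I (ubar, qbar) ((0 : U), δq))) ∧
      (∀ δz : V,
        iteratedFDeriv ℝ 2 L (ubar, qbar, zbar)
            ![(((0 : U), (0 : Q), δz) : U × Q × V), (vbar, pbar, ybar)]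
          = 0) ∧
      (∀ (δu : U) (δq : Q) (δz : V),
        iteratedFDeriv ℝ 2 L (ubar, qbar, zbar)
            ![((δu, δq, δz) : U × Q × V), (vbar, pbar, ybar)]
          = -(fderiv ℝ I (ubar, qbar) (δu, δq))) := by
  subst hubar
  subst hvbar
  have hπcd : ContDiff ℝ 2 (fun w : U × Q × V => (w.1, w.2.1)) := proj_cd
  have hζcd : ContDiff ℝ 2 (fun w : U × Q × V => w.2.2) := contDiff_snd.comp contDiff_snd
  have hJπ : ContDiff ℝ 2 (fun w : U × Q × V => J (w.1, w.2.1)) := hJ.comp hπcd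
  have hAπ : ContDiff ℝ 2 (fun w : U × Q × V => A (w.1, w.2.1)) := hA.comp hπcd
  have hL2cd : ContDiff ℝ 2 (fun w : U × Q × V => A (w.1, w.2.1) (w.2.2)) :=
    hAπ.clm_apply hζcd
  have hGcd : ContDiff ℝ 2 (fun q : Q => (S q, q)) := hS.prodMk contDiff_id
  have hSd : Differentiable ℝ S := hS.differentiable two_ne_zero
  -- second derivative of J ∘ π
  have eJ : ∀ a b : U × Q × V,
      fderiv ℝ (fderiv ℝ (fun w : U × Q × V => J (w.1, w.2.1))) (S qbar, qbar, zbar) a b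
        = fderiv ℝ (fderiv ℝ J) (S qbar, qbar) (a.1, a.2.1) (b.1, b.2.1) := by
    intro a b
    have h2 := chain2_aux J (fun w : U × Q × V => (w.1, w.2.1)) hJ hπcd (S qbar, qbar, zbar) a b
    beta_reduce at h2
    rw [proj_fderiv (S qbar, qbar, zbar), proj_fderiv2 (S qbar, qbar, zbar) a b] at h2
    simp only [map_zero, add_zero, projUQ_apply] at h2
    exact h2
  -- second derivative of A ∘ π
  have eA2 : ∀ a b : U × Q × V,
      fderiv ℝ (fderiv ℝ (fun w : U × Q × V => A (w.1, w.2.1))) (S qbar, qbar, zbar) a b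
        = fderiv ℝ (fderiv ℝ A) (S qbar, qbar) (a.1, a.2.1) (b.1, b.2.1) := by
    intro a b
    have h2 := chain2_aux A (fun w : U × Q × V => (w.1, w.2.1)) hA hπcd (S qbar, qbar, zbar) a b
    beta_reduce at h2
    rw [proj_fderiv (S qbar, qbar, zbar), proj_fderiv2 (S qbar, qbar, zbar) a b] at h2
    simp only [map_zero, add_zero, projUQ_apply] at h2
    exact h2
  -- first derivative of A ∘ π
  have eA1 : fderiv ℝ (fun w : U × Q × V => A (w.1, w.2.1)) (S qbar, qbar, zbar)
      = (fderiv ℝ A (S qbar, qbar)).comp (projUQ U Q V) := by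
    have h := fderiv_comp (𝕜 := ℝ) (g := A) (f := fun w : U × Q × V => (w.1, w.2.1))
      (S qbar, qbar, zbar) (hA.differentiable two_ne_zero _) (hπcd.differentiable two_ne_zero _)
    simp only [Function.comp_def] at h
    rw [proj_fderiv (S qbar, qbar, zbar)] at h
    exact h
  -- the master formula for the second derivative of L
  have hF1 : ∀ (a1 : U) (a2 : Q) (a3 : V) (b1 : U) (b2 : Q) (b3 : V),
      iteratedFDeriv ℝ 2 L (S qbar, qbar, zbar) ![(a1, a2, a3), (b1, b2, b3)]
        = fderiv ℝ (fderiv ℝ J) (S qbar, qbar) (a1, a2) (b1, b2)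
          - fderiv ℝ (fderiv ℝ A) (S qbar, qbar) (a1, a2) (b1, b2) zbar
          - fderiv ℝ A (S qbar, qbar) (a1, a2) b3
          - fderiv ℝ A (S qbar, qbar) (b1, b2) a3 := by
    intro a1 a2 a3 b1 b2 b3
    have hLfun : L = fun w : U × Q × V => J (w.1, w.2.1) - A (w.1, w.2.1) (w.2.2) :=
      funext fun w => hL w.1 w.2.1 w.2.2
    rw [hLfun, iteratedFDeriv_two_apply]
    simp only [Matrix.cons_val_zero, Matrix.cons_val_one, Matrix.head_cons]
    have hsub : fderiv ℝ (fun w : U × Q × V => J (w.1, w.2.1) - A (w.1, w.2.1) (w.2.2))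
        = fun y => fderiv ℝ (fun w : U × Q × V => J (w.1, w.2.1)) y
            - fderiv ℝ (fun w : U × Q × V => A (w.1, w.2.1) (w.2.2)) y :=
      funext fun y => fderiv_fun_sub (hJπ.differentiable two_ne_zero y)
        (hL2cd.differentiable two_ne_zero y)
    rw [hsub]
    have hJ1 : ContDiff ℝ 1 (fderiv ℝ (fun w : U × Q × V => J (w.1, w.2.1))) :=
      hJπ.fderiv_right (by norm_num)
    have hL21 : ContDiff ℝ 1 (fderiv ℝ (fun w : U × Q × V => A (w.1, w.2.1) (w.2.2))) :=
      hL2cd.fderiv_right (by norm_num)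
    rw [fderiv_fun_sub (hJ1.differentiable one_ne_zero _) (hL21.differentiable one_ne_zero _)]
    rw [ContinuousLinearMap.sub_apply, ContinuousLinearMap.sub_apply]
    rw [eJ (a1, a2, a3) (b1, b2, b3)]
    have hApp := app2_aux (fun w : U × Q × V => A (w.1, w.2.1)) hAπ
      ((ContinuousLinearMap.snd ℝ Q V).comp (ContinuousLinearMap.snd ℝ U (Q × V)))
      (S qbar, qbar, zbar) (a1, a2, a3) (b1, b2, b3)
    beta_reduce at hApp
    simp only [ContinuousLinearMap.coe_comp', Function.comp_apply,
      ContinuousLinearMap.coe_snd'] at hApp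
    rw [eA2 (a1, a2, a3) (b1, b2, b3), eA1] at hApp
    simp only [ContinuousLinearMap.comp_apply, projUQ_apply] at hApp
    rw [hApp]
    simp only []
    ring
  -- second derivative of the reduced cost functional j
  have hjpp : ∀ δq : Q, iteratedFDeriv ℝ 2 j qbar ![δq, pbar]
      = fderiv ℝ (fderiv ℝ J) (S qbar, qbar) (fderiv ℝ S qbar δq, δq)
          (fderiv ℝ S qbar pbar, pbar)
        + fderiv ℝ J (S qbar, qbar) (fderiv ℝ (fderiv ℝ S) qbar δq pbar, 0) := by
    intro δq
    have hjfun : j = fun q => J (S q, q) := funext hj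
    rw [hjfun, iteratedFDeriv_two_apply]
    simp only [Matrix.cons_val_zero, Matrix.cons_val_one, Matrix.head_cons]
    have h2 := chain2_aux J (fun q : Q => (S q, q)) hJ hGcd qbar δq pbar
    beta_reduce at h2
    rw [pair_fderiv S hSd qbar, pair_fderiv2 S hS qbar δq pbar] at h2
    simp only [ContinuousLinearMap.prod_apply, ContinuousLinearMap.coe_id', id_eq] at h2
    exact h2
  -- first derivative of the reduced quantity of interest i
  have hip : ∀ δq : Q, fderiv ℝ i qbar δq
      = fderiv ℝ I (S qbar, qbar) (fderiv ℝ S qbar δq, δq) := by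
    intro δq
    have hifun : i = fun q => I (S q, q) := funext hi
    rw [hifun]
    have h := fderiv_comp (𝕜 := ℝ) (g := I) (f := fun q : Q => (S q, q)) qbar
      (hI.differentiable one_ne_zero _) (hGcd.differentiable two_ne_zero qbar)
    simp only [Function.comp_def] at h
    rw [h, pair_fderiv S hSd qbar]
    simp
  -- first derivative of the state equation
  have hE1 : ∀ δq : Q, fderiv ℝ A (S qbar, qbar) (fderiv ℝ S qbar δq, δq) = 0 := by
    intro δq
    have h := fderiv_comp (𝕜 := ℝ) (g := A) (f := fun q : Q => (S q, q)) qbar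
      (hA.differentiable two_ne_zero _) (hGcd.differentiable two_ne_zero qbar)
    have h0 : (A ∘ fun q : Q => (S q, q)) = fun _ : Q => (0 : V →L[ℝ] ℝ) :=
      funext fun q => hstate q
    rw [h0, fderiv_const_apply, pair_fderiv S hSd qbar] at h
    have h2 := congrArg (fun T : Q →L[ℝ] (V →L[ℝ] ℝ) => T δq) h
    simp only [ContinuousLinearMap.zero_apply, ContinuousLinearMap.comp_apply,
      ContinuousLinearMap.prod_apply, ContinuousLinearMap.coe_id', id_eq] at h2
    exact h2.symm
  -- second derivative of the state equation
  have hE2 : ∀ δq : Q,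
      fderiv ℝ (fderiv ℝ A) (S qbar, qbar) (fderiv ℝ S qbar δq, δq)
          (fderiv ℝ S qbar pbar, pbar)
        + fderiv ℝ A (S qbar, qbar) (fderiv ℝ (fderiv ℝ S) qbar δq pbar, 0) = 0 := by
    intro δq
    have h2 := chain2_aux A (fun q : Q => (S q, q)) hA hGcd qbar δq pbar
    beta_reduce at h2
    rw [pair_fderiv S hSd qbar, pair_fderiv2 S hS qbar δq pbar] at h2
    have h0 : (fun y : Q => A (S y, y)) = fun _ : Q => (0 : V →L[ℝ] ℝ) :=
      funext fun q => hstate q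
    rw [h0] at h2
    have hz : fderiv ℝ (fun _ : Q => (0 : V →L[ℝ] ℝ))
        = fun _ : Q => (0 : Q →L[ℝ] V →L[ℝ] ℝ) :=
      funext fun y => fderiv_const_apply 0
    rw [hz, fderiv_const_apply] at h2
    simp only [ContinuousLinearMap.zero_apply, ContinuousLinearMap.prod_apply,
      ContinuousLinearMap.coe_id', id_eq] at h2
    exact h2.symm
  -- scalar versions
  have hE2z : ∀ δq : Q,
      fderiv ℝ (fderiv ℝ A) (S qbar, qbar) (fderiv ℝ S qbar δq, δq)
          (fderiv ℝ S qbar pbar, pbar) zbar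
        + fderiv ℝ A (S qbar, qbar) (fderiv ℝ (fderiv ℝ S) qbar δq pbar, 0) zbar = 0 := by
    intro δq
    have := congrArg (fun T : V →L[ℝ] ℝ => T zbar) (hE2 δq)
    simpa using this
  have hE1y : ∀ δq : Q,
      fderiv ℝ A (S qbar, qbar) (fderiv ℝ S qbar δq, δq) ybar = 0 := by
    intro δq
    have := congrArg (fun T : V →L[ℝ] ℝ => T ybar) (hE1 δq)
    simpa using this
  -- the key identity (★)
  have hstar : ∀ δq : Q,
      fderiv ℝ (fderiv ℝ J) (S qbar, qbar) (fderiv ℝ S qbar δq, δq)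
          (fderiv ℝ S qbar pbar, pbar)
        - fderiv ℝ (fderiv ℝ A) (S qbar, qbar) (fderiv ℝ S qbar δq, δq)
            (fderiv ℝ S qbar pbar, pbar) zbar
        = -(fderiv ℝ I (S qbar, qbar) (fderiv ℝ S qbar δq, δq)) := by
    intro δq
    have h1 := hpbar δq
    rw [hjpp δq, hip δq] at h1
    have h2 := hzbar (fderiv ℝ (fderiv ℝ S) qbar δq pbar)
    have h3 := hE2z δq
    linarith
  -- translated first row (hybar)
  have hyb' : ∀ δu : U,
      fderiv ℝ (fderiv ℝ J) (S qbar, qbar) (δu, 0) (fderiv ℝ S qbar pbar, pbar)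
        - fderiv ℝ (fderiv ℝ A) (S qbar, qbar) (δu, 0) (fderiv ℝ S qbar pbar, pbar) zbar
        - fderiv ℝ A (S qbar, qbar) (δu, 0) ybar
        = -(fderiv ℝ I (S qbar, qbar) (δu, 0)) := by
    intro δu
    have h1 := hybar δu
    rw [hF1 δu 0 0 (fderiv ℝ S qbar pbar) pbar ybar] at h1
    simp only [map_zero] at h1
    linarith
  -- splitting lemmas
  have hsJ : ∀ (u : U) (q : Q),
      fderiv ℝ (fderiv ℝ J) (S qbar, qbar) (u, q) (fderiv ℝ S qbar pbar, pbar)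
        = fderiv ℝ (fderiv ℝ J) (S qbar, qbar) (u, 0) (fderiv ℝ S qbar pbar, pbar)
          + fderiv ℝ (fderiv ℝ J) (S qbar, qbar) (0, q) (fderiv ℝ S qbar pbar, pbar) := by
    intro u q
    have h : ((u, q) : U × Q) = (u, 0) + (0, q) := by simp
    rw [h, map_add, ContinuousLinearMap.add_apply]
  have hsA : ∀ (u : U) (q : Q),
      fderiv ℝ (fderiv ℝ A) (S qbar, qbar) (u, q) (fderiv ℝ S qbar pbar, pbar) zbar
        = fderiv ℝ (fderiv ℝ A) (S qbar, qbar) (u, 0) (fderiv ℝ S qbar pbar, pbar) zbar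
          + fderiv ℝ (fderiv ℝ A) (S qbar, qbar) (0, q) (fderiv ℝ S qbar pbar, pbar) zbar := by
    intro u q
    have h : ((u, q) : U × Q) = (u, 0) + (0, q) := by simp
    rw [h, map_add, ContinuousLinearMap.add_apply, ContinuousLinearMap.add_apply]
  have hsDA : ∀ (u : U) (q : Q) (z : V),
      fderiv ℝ A (S qbar, qbar) (u, q) z
        = fderiv ℝ A (S qbar, qbar) (u, 0) z + fderiv ℝ A (S qbar, qbar) (0, q) z := by
    intro u q z
    have h : ((u, q) : U × Q) = (u, 0) + (0, q) := by simp
    rw [h, map_add, ContinuousLinearMap.add_apply]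
  have hsDI : ∀ (u : U) (q : Q),
      fderiv ℝ I (S qbar, qbar) (u, q)
        = fderiv ℝ I (S qbar, qbar) (u, 0) + fderiv ℝ I (S qbar, qbar) (0, q) := by
    intro u q
    have h : ((u, q) : U × Q) = (u, 0) + (0, q) := by simp
    rw [h, map_add]
  -- the second row as a scalar identity
  have hrow2 : ∀ δq : Q,
      fderiv ℝ (fderiv ℝ J) (S qbar, qbar) (0, δq) (fderiv ℝ S qbar pbar, pbar)
        - fderiv ℝ (fderiv ℝ A) (S qbar, qbar) (0, δq) (fderiv ℝ S qbar pbar, pbar) zbar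
        - fderiv ℝ A (S qbar, qbar) (0, δq) ybar
        = -(fderiv ℝ I (S qbar, qbar) (0, δq)) := by
    intro δq
    have h1 := hstar δq
    have h2 := hyb' (fderiv ℝ S qbar δq)
    have h3 := hsJ (fderiv ℝ S qbar δq) δq
    have h4 := hsA (fderiv ℝ S qbar δq) δq
    have h5 := hsDA (fderiv ℝ S qbar δq) δq ybar
    have h6 := hsDI (fderiv ℝ S qbar δq) δq
    have h7 := hE1y δq
    linarith
  refine ⟨?_, ?_, ?_⟩
  · intro δq
    rw [hF1 0 δq 0 (fderiv ℝ S qbar pbar) pbar ybar]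
    have h0 : ((0 : U), (0 : Q)) = (0 : U × Q) := rfl
    have h1 := hrow2 δq
    simp only [map_zero]
    linarith
  · intro δz
    rw [hF1 0 0 δz (fderiv ℝ S qbar pbar) pbar ybar]
    have h0 : ((0 : U), (0 : Q)) = (0 : U × Q) := rfl
    rw [h0]
    simp only [map_zero, ContinuousLinearMap.zero_apply]
    have h7 := congrArg (fun T : V →L[ℝ] ℝ => T δz) (hE1 pbar)
    simp only [ContinuousLinearMap.zero_apply] at h7
    linarith
  · intro δu δq δz
    rw [hF1 δu δq δz (fderiv ℝ S qbar pbar) pbar ybar]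
    have h1 := hrow2 δq
    have h2 := hyb' δu
    have h3 := hsJ δu δq
    have h4 := hsA δu δq
    have h5 := hsDA δu δq ybar
    have h6 := hsDI δu δq
    have h7 := congrArg (fun T : V →L[ℝ] ℝ => T δz) (hE1 pbar)
    simp only [ContinuousLinearMap.zero_apply] at h7
    linarith
end

section
/- (Proposition: adjoint variables when the quantity of interest equals the cost functional) Let U, Q, V be real normed vector spaces. Let A : U × Q → V* be twice continuously Fréchet differentiable, J : U × Q → ℝ twice continuously Fréchet differentiable, and S : Q → U twice continuously Fréchet differentiable with A(S(q), q) = 0 for all q ∈ Q. Define the reduced cost functional j(q) := J(S(q), q). Let q̄ ∈ Q satisfy Dj(q̄) = 0, let ū := S(q̄), and let z̄ ∈ V satisfy the adjoint state equation D_uJ(ū, q̄)(δu) − D_uA(ū, q̄)(δu)(z̄) = 0 for all δu ∈ U. Suppose the map p ↦ D²j(q̄)(·, p) from Q to Q* is injective and the map z ↦ D_uA(ū, q̄)(·)(z) from V to U* is injective. If p̄ ∈ Q solves D²j(q̄)(δq, p̄) = −Dj(q̄)(δq) for all δq ∈ Q, v̄ := DS(q̄)(p̄), and ȳ ∈ V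 satisfies, for all δu ∈ U, D²L(ū,q̄,z̄)((δu,0,0),(v̄,p̄,ȳ)) = −D_uJ(ū,q̄)(δu), where L(u,q,z) := J(u,q) − A(u,q)(z), then (v̄, p̄, ȳ) = (0, 0, z̄). -/
open ContinuousLinearMap
set_option maxHeartbeats 1000000

section Aux
variable {U Q V : Type*} [NormedAddCommGroup U] [NormedSpace ℝ U]
    [NormedAddCommGroup Q] [NormedSpace ℝ Q]
    [NormedAddCommGroup V] [NormedSpace ℝ V]

/-- The projection `(u,q,z) ↦ (u,q)` as a CLM. -/
noncomputable def πUQ : (U × Q × V) →L[ℝ] (U × Q) :=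
  (ContinuousLinearMap.fst ℝ U (Q × V)).prod
    ((ContinuousLinearMap.fst ℝ Q V).comp (ContinuousLinearMap.snd ℝ U (Q × V)))

/-- The projection `(u,q,z) ↦ z` as a CLM. -/
noncomputable def κV : (U × Q × V) →L[ℝ] V :=
  (ContinuousLinearMap.snd ℝ Q V).comp (ContinuousLinearMap.snd ℝ U (Q × V))

@[simp] lemma πUQ_apply (p : U × Q × V) : (πUQ p : U × Q) = (p.1, p.2.1) := rfl
@[simp] lemma κV_apply (p : U × Q × V) : (κV p : V) = p.2.2 := rfl

lemma key_second_deriv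
    (A : U × Q → V →L[ℝ] ℝ) (hA : ContDiff ℝ 2 A)
    (J : U × Q → ℝ) (hJ : ContDiff ℝ 2 J)
    (L : U × Q × V → ℝ) (hL : ∀ (u : U) (q : Q) (z : V), L (u, q, z) = J (u, q) - A (u, q) z)
    (x₀ : U × Q × V) (δu : U) (y : V) :
    iteratedFDeriv ℝ 2 L x₀ ![((δu, (0 : Q), (0 : V)) : U × Q × V), ((0 : U), (0 : Q), y)]
      = -(fderiv ℝ A (x₀.1, x₀.2.1) (δu, (0 : Q)) y) := by
  have hLfun : L = fun p : U × Q × V => J (πUQ p) - A (πUQ p) (κV p) := by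
    funext p; obtain ⟨u, q, z⟩ := p; exact hL u q z
  have hAd : Differentiable ℝ A := hA.differentiable (by norm_num)
  have hJd : Differentiable ℝ J := hJ.differentiable (by norm_num)
  have hAd' : Differentiable ℝ (fderiv ℝ A) :=
    (hA.fderiv_right (m := 1) (by norm_num)).differentiable (by norm_num)
  have hJd' : Differentiable ℝ (fderiv ℝ J) :=
    (hJ.fderiv_right (m := 1) (by norm_num)).differentiable (by norm_num)
  set e : V →L[ℝ] (V →L[ℝ] ℝ) →L[ℝ] ℝ := ContinuousLinearMap.apply ℝ ℝ with he
  -- first derivative of L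
  have hDL : ∀ x, HasFDerivAt L
      ((fderiv ℝ J (πUQ x)).comp (πUQ : (U × Q × V) →L[ℝ] U × Q)
        - (((A (πUQ x)).comp (κV : (U × Q × V) →L[ℝ] V))
          + (e (κV x)).comp
              ((fderiv ℝ A (πUQ x)).comp (πUQ : (U × Q × V) →L[ℝ] U × Q)))) x := by
    intro x
    rw [hLfun]
    have h1 : HasFDerivAt (fun p : U × Q × V => J (πUQ p))
        ((fderiv ℝ J (πUQ x)).comp (πUQ : (U × Q × V) →L[ℝ] U × Q)) x :=
      (hJd (πUQ x)).hasFDerivAt.comp x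
        ((πUQ : (U × Q × V) →L[ℝ] U × Q).hasFDerivAt : HasFDerivAt _ _ _)
    have hc : HasFDerivAt (fun p : U × Q × V => A (πUQ p))
        ((fderiv ℝ A (πUQ x)).comp (πUQ : (U × Q × V) →L[ℝ] U × Q)) x :=
      (hAd (πUQ x)).hasFDerivAt.comp x
        ((πUQ : (U × Q × V) →L[ℝ] U × Q).hasFDerivAt : HasFDerivAt _ _ _)
    have h2 := hc.clm_apply
        ((κV : (U × Q × V) →L[ℝ] V).hasFDerivAt : HasFDerivAt _ _ _)
    have h3 := h1.sub h2
    have heq : (fderiv ℝ J (πUQ x)).comp (πUQ : (U × Q × V) →L[ℝ] U × Q)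
        - ((A (πUQ x)).comp (κV : (U × Q × V) →L[ℝ] V)
          + ((fderiv ℝ A (πUQ x)).comp (πUQ : (U × Q × V) →L[ℝ] U × Q)).flip (κV x))
        = (fderiv ℝ J (πUQ x)).comp (πUQ : (U × Q × V) →L[ℝ] U × Q)
          - (((A (πUQ x)).comp (κV : (U × Q × V) →L[ℝ] V))
            + (e (κV x)).comp
                ((fderiv ℝ A (πUQ x)).comp (πUQ : (U × Q × V) →L[ℝ] U × Q))) :=
      ContinuousLinearMap.ext fun h => rfl
    rw [heq] at h3
    exact h3
  have hfd : fderiv ℝ L = fun x =>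
      (fderiv ℝ J (πUQ x)).comp (πUQ : (U × Q × V) →L[ℝ] U × Q)
        - (((A (πUQ x)).comp (κV : (U × Q × V) →L[ℝ] V))
          + (e (κV x)).comp
              ((fderiv ℝ A (πUQ x)).comp (πUQ : (U × Q × V) →L[ℝ] U × Q))) :=
    funext fun x => (hDL x).fderiv
  -- pieces for the second derivative
  have hJ2 : HasFDerivAt (fun x : U × Q × V => fderiv ℝ J (πUQ x))
      ((fderiv ℝ (fderiv ℝ J) (πUQ x₀)).comp (πUQ : (U × Q × V) →L[ℝ] U × Q)) x₀ :=
    (hJd' (πUQ x₀)).hasFDerivAt.comp x₀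
      ((πUQ : (U × Q × V) →L[ℝ] U × Q).hasFDerivAt : HasFDerivAt _ _ _)
  have hA1 : HasFDerivAt (fun x : U × Q × V => A (πUQ x))
      ((fderiv ℝ A (πUQ x₀)).comp (πUQ : (U × Q × V) →L[ℝ] U × Q)) x₀ :=
    (hAd (πUQ x₀)).hasFDerivAt.comp x₀
      ((πUQ : (U × Q × V) →L[ℝ] U × Q).hasFDerivAt : HasFDerivAt _ _ _)
  have hA2 : HasFDerivAt (fun x : U × Q × V => fderiv ℝ A (πUQ x))
      ((fderiv ℝ (fderiv ℝ A) (πUQ x₀)).comp (πUQ : (U × Q × V) →L[ℝ] U × Q)) x₀ :=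
    HasFDerivAt.comp (g := fderiv ℝ A) x₀ (hAd' (πUQ x₀)).hasFDerivAt
      ((πUQ : (U × Q × V) →L[ℝ] U × Q).hasFDerivAt : HasFDerivAt _ _ _)
  -- term 1 : x ↦ (fderiv J (πUQ x)).comp πUQ
  have hT1 := hJ2.clm_comp
    (hasFDerivAt_const (πUQ : (U × Q × V) →L[ℝ] U × Q) x₀)
  -- term 2 : x ↦ (A (πUQ x)).comp κV
  have hT2 := hA1.clm_comp (hasFDerivAt_const (κV : (U × Q × V) →L[ℝ] V) x₀)
  -- term 3 : x ↦ (e (κV x)).comp ((fderiv A (πUQ x)).comp πUQ)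
  have hA3 := hA2.clm_comp
    (hasFDerivAt_const (πUQ : (U × Q × V) →L[ℝ] U × Q) x₀)
  have hE : HasFDerivAt (⇑(e.comp (κV : (U × Q × V) →L[ℝ] V)))
      (e.comp (κV : (U × Q × V) →L[ℝ] V)) x₀ :=
    ContinuousLinearMap.hasFDerivAt _
  have hT3 := hE.clm_comp hA3
  have hDD : HasFDerivAt (𝕜 := ℝ) (fun x : U × Q × V =>
      (fderiv ℝ J (πUQ x)).comp (πUQ : (U × Q × V) →L[ℝ] U × Q)
        - (((A (πUQ x)).comp (κV : (U × Q × V) →L[ℝ] V))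
          + (e (κV x)).comp
              ((fderiv ℝ A (πUQ x)).comp (πUQ : (U × Q × V) →L[ℝ] U × Q)))) _ x₀ :=
    hT1.sub (hT2.add hT3)
  rw [iteratedFDeriv_two_apply, hfd, hDD.fderiv]
  have hπ1 : (πUQ ((δu, (0 : Q), (0 : V)) : U × Q × V) : U × Q) = (δu, 0) := rfl
  have hπ2 : (πUQ (((0 : U), (0 : Q), y) : U × Q × V) : U × Q) = 0 := rfl
  have hκ1 : (κV ((δu, (0 : Q), (0 : V)) : U × Q × V) : V) = 0 := rfl
  have hκ2 : (κV (((0 : U), (0 : Q), y) : U × Q × V) : V) = y := rfl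
  simp only [Matrix.cons_val_zero, Matrix.cons_val_one, Matrix.head_cons,
    ContinuousLinearMap.sub_apply, ContinuousLinearMap.add_apply,
    ContinuousLinearMap.comp_apply, ContinuousLinearMap.flip_apply,
    ContinuousLinearMap.coe_comp', Function.comp_apply,
    ContinuousLinearMap.compL_apply, ContinuousLinearMap.zero_apply,
    ContinuousLinearMap.zero_comp, ContinuousLinearMap.comp_zero,
    hπ1, hπ2, hκ1, hκ2, map_zero, ContinuousLinearMap.zero_apply]
  simp [he, ContinuousLinearMap.apply_apply, πUQ_apply]
end Aux



/-- Proposition: when the quantity of interest equals the cost functional and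
`D²j(q̄)` is injective (as a map `p ↦ D²j(q̄)(·,p)`), as well as
`z ↦ D_uA(ū,q̄)(·)(z)`, the adjoint variables satisfy `(v̄, p̄, ȳ) = (0, 0, z̄)`. -/
theorem adjoint_variables_when_goal_equals_cost
    (U Q V : Type*) [NormedAddCommGroup U] [NormedSpace ℝ U]
    [NormedAddCommGroup Q] [NormedSpace ℝ Q]
    [NormedAddCommGroup V] [NormedSpace ℝ V]
    (A : U × Q → V →L[ℝ] ℝ) (hA : ContDiff ℝ 2 A)
    (J : U × Q → ℝ) (hJ : ContDiff ℝ 2 J)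
    (S : Q → U) (hS : ContDiff ℝ 2 S)
    (hstate : ∀ q : Q, A (S q, q) = 0)
    (L : U × Q × V → ℝ) (hL : ∀ (u : U) (q : Q) (z : V), L (u, q, z) = J (u, q) - A (u, q) z)
    (j : Q → ℝ) (hj : ∀ q : Q, j q = J (S q, q))
    (qbar : Q) (hopt : fderiv ℝ j qbar = 0)
    (ubar : U) (hubar : ubar = S qbar)
    (zbar : V)
    (hzbar : ∀ δu : U,
      fderiv ℝ J (ubar, qbar) (δu, (0 : Q))
        - fderiv ℝ A (ubar, qbar) (δu, (0 : Q)) zbar = 0)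
    (hjinj : ∀ p₁ p₂ : Q,
      (∀ δq : Q, iteratedFDeriv ℝ 2 j qbar ![δq, p₁]
        = iteratedFDeriv ℝ 2 j qbar ![δq, p₂]) → p₁ = p₂)
    (hAinj : ∀ z₁ z₂ : V,
      (∀ δu : U, fderiv ℝ A (ubar, qbar) (δu, (0 : Q)) z₁
        = fderiv ℝ A (ubar, qbar) (δu, (0 : Q)) z₂) → z₁ = z₂)
    (pbar : Q)
    (hpbar : ∀ δq : Q,
      iteratedFDeriv ℝ 2 j qbar ![δq, pbar] = -(fderiv ℝ j qbar δq))
    (vbar : U) (hvbar : vbar = fderiv ℝ S qbar pbar)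
    (ybar : V)
    (hybar : ∀ δu : U,
      iteratedFDeriv ℝ 2 L (ubar, qbar, zbar)
          ![((δu, (0 : Q), (0 : V)) : U × Q × V), (vbar, pbar, ybar)]
        = -(fderiv ℝ J (ubar, qbar) (δu, (0 : Q)))) :
    vbar = 0 ∧ pbar = 0 ∧ ybar = zbar := by
  have hp0 : pbar = 0 := by
    apply hjinj pbar 0
    intro δq
    have h1 := hpbar δq
    have h2 : iteratedFDeriv ℝ 2 j qbar ![δq, (0 : Q)] = 0 :=
      (iteratedFDeriv ℝ 2 j qbar).map_coord_zero 1 (by simp)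
    rw [h1, h2, hopt]
    simp
  have hv0 : vbar = 0 := by
    rw [hvbar, hp0, map_zero]
  rw [hv0, hp0] at hybar
  refine ⟨hv0, hp0, hAinj ybar zbar fun δu => ?_⟩
  have h1 := hybar δu
  have hkey := key_second_deriv A hA J hJ L hL (ubar, qbar, zbar) δu ybar
  simp only at hkey
  rw [hkey] at h1
  have h2 := hzbar δu
  linarith
end
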